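/- arXiv:2008.06211 — 5 statements merged into one kernel-verified Lean document; each statement's English description precedes it below -/
import Mathlib

section
/- For a > 0, the double integral ∫₀^∞ ∫₀^z e^{-(a y² + z²)/2} dy dz equals (1/√a)·arctan(√a). -/
open MeasureTheory Real

private lemma gauss_deriv (c : ℝ) (hc : 0 < c) (z : ℝ) :
    HasDerivAt (fun z : ℝ => -(1/c) * Real.exp (-(c * z ^ 2) / 2))
      (z * Real.exp (-(c * z ^ 2) / 2)) z := by
  have h1 : HasDerivAt (fun z : ℝ => -(c * z ^ 2) / 2) (-(c * z)) z := by
    have := ((hasDerivAt_pow 2 z).const_mul c).neg.div_const 2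
    exact this.congr_deriv (by norm_num; ring)
  have h2 := (h1.exp).const_mul (-(1/c))
  refine h2.congr_deriv ?_
  field_simp

private lemma gauss_int (c : ℝ) (hc : 0 < c) :
    ∫ z in Set.Ioi (0:ℝ), z * Real.exp (-(c * z ^ 2) / 2) = 1 / c := by
  have hder : ∀ x ∈ Set.Ici (0:ℝ),
      HasDerivAt (fun z : ℝ => -(1/c) * Real.exp (-(c * z ^ 2) / 2))
        (x * Real.exp (-(c * x ^ 2) / 2)) x := fun x _ => gauss_deriv c hc x
  have hpos : ∀ x ∈ Set.Ioi (0:ℝ), 0 ≤ x * Real.exp (-(c * x ^ 2) / 2) := fun x hx =>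
    mul_nonneg (le_of_lt hx) (Real.exp_pos _).le
  have htends : Filter.Tendsto (fun z : ℝ => -(1/c) * Real.exp (-(c * z ^ 2) / 2))
      Filter.atTop (nhds 0) := by
    have h1 : Filter.Tendsto (fun z : ℝ => -(c * z ^ 2) / 2) Filter.atTop Filter.atBot := by
      apply Filter.Tendsto.atBot_div_const (by norm_num)
      apply Filter.tendsto_neg_atBot_iff.mpr
      exact (Filter.tendsto_pow_atTop (by norm_num)).const_mul_atTop hc
    have := (Real.tendsto_exp_atBot.comp h1).const_mul (-(1/c))
    simpa using this
  have := MeasureTheory.integral_Ioi_of_hasDerivAt_of_nonneg' hder hpos htends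
  rw [this]; simp

private lemma gauss_integrable (c : ℝ) (hc : 0 < c) :
    IntegrableOn (fun z : ℝ => z * Real.exp (-(c * z ^ 2) / 2)) (Set.Ioi 0) := by
  refine MeasureTheory.integrableOn_Ioi_deriv_of_nonneg' (l := 0) (g := fun z : ℝ =>
    -(1/c) * Real.exp (-(c * z ^ 2) / 2)) (fun x _ => gauss_deriv c hc x)
    (fun x hx => mul_nonneg (le_of_lt hx) (Real.exp_pos _).le) ?_
  have h1 : Filter.Tendsto (fun z : ℝ => -(c * z ^ 2) / 2) Filter.atTop Filter.atBot := by
    apply Filter.Tendsto.atBot_div_const (by norm_num)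
    apply Filter.tendsto_neg_atBot_iff.mpr
    exact (Filter.tendsto_pow_atTop (by norm_num)).const_mul_atTop hc
  have := (Real.tendsto_exp_atBot.comp h1).const_mul (-(1/c))
  simpa using this

theorem stmt_0 (a : ℝ) (ha : 0 < a) :
    ∫ z in Set.Ioi (0:ℝ), ∫ y in (0:ℝ)..z, Real.exp (-(a * y ^ 2 + z ^ 2) / 2)
      = (1 / Real.sqrt a) * Real.arctan (Real.sqrt a) := by
  set F : ℝ × ℝ → ℝ := fun p => p.1 * Real.exp (-((a * p.2 ^ 2 + 1) * p.1 ^ 2) / 2) with hF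
  -- Step 1: rewrite inner integral via substitution y = z t
  have step1 : ∫ z in Set.Ioi (0:ℝ), ∫ y in (0:ℝ)..z, Real.exp (-(a * y ^ 2 + z ^ 2) / 2)
      = ∫ z in Set.Ioi (0:ℝ), ∫ t in Set.Ioc (0:ℝ) 1, F (z, t) := by
    refine setIntegral_congr_fun measurableSet_Ioi (fun z hz => ?_)
    have hz0 : z ≠ 0 := ne_of_gt hz
    have := intervalIntegral.smul_integral_comp_mul_left
      (fun y => Real.exp (-(a * y ^ 2 + z ^ 2) / 2)) (a := 0) (b := 1) z
    simp only [mul_zero, mul_one, smul_eq_mul] at this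
    rw [← this, intervalIntegral.integral_of_le (by norm_num : (0:ℝ) ≤ 1),
      ← MeasureTheory.integral_const_mul]
    refine setIntegral_congr_fun measurableSet_Ioc (fun t _ => ?_)
    simp only [hF]
    ring_nf
  rw [step1]
  -- Step 2: Fubini
  have hFcont : Continuous F := by fun_prop
  have hint : Integrable (Function.uncurry fun z t => F (z, t))
      ((volume.restrict (Set.Ioi (0:ℝ))).prod (volume.restrict (Set.Ioc (0:ℝ) 1))) := by
    have hbound : Integrable (fun p : ℝ × ℝ => (p.1 * Real.exp (-(1 * p.1 ^ 2) / 2)) * 1)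
        ((volume.restrict (Set.Ioi (0:ℝ))).prod (volume.restrict (Set.Ioc (0:ℝ) 1))) :=
      (gauss_integrable 1 one_pos).mul_prod (integrable_const 1)
    refine hbound.mono (hFcont.aestronglyMeasurable) ?_
    rw [MeasureTheory.Measure.prod_restrict]
    filter_upwards [ae_restrict_mem (measurableSet_Ioi.prod measurableSet_Ioc)] with p hp
    obtain ⟨hp1, hp2⟩ := hp
    have hp1' : 0 < p.1 := hp1
    simp only [Function.uncurry, hF, mul_one, norm_mul, Real.norm_eq_abs,
      abs_of_pos hp1', Real.abs_exp]
    refine mul_le_mul_of_nonneg_left ?_ hp1'.le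
    apply Real.exp_le_exp.mpr
    have : p.1 ^ 2 ≤ (a * p.2 ^ 2 + 1) * p.1 ^ 2 := by
      nlinarith [sq_nonneg p.2, sq_nonneg p.1, mul_nonneg ha.le (sq_nonneg p.2)]
    linarith
  rw [MeasureTheory.integral_integral_swap hint]
  -- Step 3: inner Gaussian integral
  have step3 : ∫ t in Set.Ioc (0:ℝ) 1, ∫ z in Set.Ioi (0:ℝ), F (z, t)
      = ∫ t in Set.Ioc (0:ℝ) 1, 1 / (a * t ^ 2 + 1) := by
    refine setIntegral_congr_fun measurableSet_Ioc (fun t _ => ?_)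
    have hc : 0 < a * t ^ 2 + 1 := by positivity
    exact gauss_int (a * t ^ 2 + 1) hc
  rw [step3]
  -- Step 4: compute ∫₀¹ 1/(a t²+1) dt
  rw [← intervalIntegral.integral_of_le (by norm_num : (0:ℝ) ≤ 1)]
  have hsa : Real.sqrt a ≠ 0 := ne_of_gt (Real.sqrt_pos.mpr ha)
  have key : ∀ t : ℝ, 1 / (a * t ^ 2 + 1) = (fun u => ((1:ℝ) + u ^ 2)⁻¹) (Real.sqrt a * t) := by
    intro t
    have : (Real.sqrt a * t) ^ 2 = a * t ^ 2 := by
      rw [mul_pow, Real.sq_sqrt ha.le]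
    simp only [this]
    rw [one_div, add_comm]
  simp_rw [key]
  rw [intervalIntegral.integral_comp_mul_left (fun u => ((1:ℝ) + u ^ 2)⁻¹) hsa]
  simp [integral_inv_one_add_sq, smul_eq_mul, one_div]
end

section
/- If Y₁, Y₂, Y₃ are independent standard Gaussian random variables, then E[min(|Y₁|, |Y₂|, |Y₃|)] = (12/π^{3/2})·(√2·π/4 − arctan(√2)). -/
open MeasureTheory ProbabilityTheory Real

open Set Filter Topology

noncomputable def Qf (t : ℝ) : ℝ := ∫ y in Set.Ioi t, Real.exp (-y^2/2)

lemma expform (y : ℝ) : Real.exp (-y^2/2) = Real.exp (-(1/2 : ℝ) * y^2) := by ring_nf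

lemma intE : Integrable (fun y : ℝ => Real.exp (-y^2/2)) := by
  simp_rw [expform]
  exact integrable_exp_neg_mul_sq (by norm_num)

lemma Qf_zero : Qf 0 = Real.sqrt (π/2) := by
  have : Qf 0 = ∫ y in Set.Ioi (0:ℝ), Real.exp (-(1/2:ℝ) * y^2) := by
    unfold Qf; congr 1; ext y; ring_nf
  rw [this, integral_gaussian_Ioi]
  rw [show π / (1/2 : ℝ) = 2^2 * (π/2) by ring, Real.sqrt_mul (by positivity),
    Real.sqrt_sq (by norm_num)]
  ring

lemma Qf_nonneg (t : ℝ) : 0 ≤ Qf t :=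
  setIntegral_nonneg measurableSet_Ioi (fun y _ => (Real.exp_pos _).le)

lemma Qf_eq (t : ℝ) (ht : 0 ≤ t) : Qf t = Qf 0 - ∫ y in (0:ℝ)..t, Real.exp (-y^2/2) := by
  have h1 : (Set.Ioc (0:ℝ) t) ∪ (Set.Ioi t) = Set.Ioi 0 := Set.Ioc_union_Ioi_eq_Ioi ht
  have h2 : ∫ y in (0:ℝ)..t, Real.exp (-y^2/2) = ∫ y in Set.Ioc (0:ℝ) t, Real.exp (-y^2/2) :=
    intervalIntegral.integral_of_le ht
  have h3 : Qf 0 = (∫ y in Set.Ioc (0:ℝ) t, Real.exp (-y^2/2)) + Qf t := by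
    unfold Qf
    rw [← h1, setIntegral_union (Set.Ioc_disjoint_Ioi le_rfl) measurableSet_Ioi
      intE.integrableOn intE.integrableOn]
  rw [h2, h3]; ring

lemma Qf_le (t : ℝ) (ht : 0 ≤ t) : Qf t ≤ 2 * Real.sqrt π * Real.exp (-t^2/4) := by
  have h1 : Qf t ≤ ∫ y in Set.Ioi t, Real.exp (-t^2/4) * Real.exp (-(1/4:ℝ) * y^2) := by
    refine setIntegral_mono_on intE.integrableOn ?_ measurableSet_Ioi ?_
    · exact ((integrable_exp_neg_mul_sq (by norm_num : (0:ℝ) < 1/4)).const_mul _).integrableOn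
    · intro y hy
      rw [← Real.exp_add, Real.exp_le_exp]
      have : t ≤ y := le_of_lt hy
      nlinarith [this, ht]
  have h2 : ∫ y in Set.Ioi t, Real.exp (-t^2/4) * Real.exp (-(1/4:ℝ) * y^2)
      = Real.exp (-t^2/4) * ∫ y in Set.Ioi t, Real.exp (-(1/4:ℝ) * y^2) := by
    rw [integral_const_mul]
  have h3 : ∫ y in Set.Ioi t, Real.exp (-(1/4:ℝ) * y^2) ≤ ∫ y : ℝ, Real.exp (-(1/4:ℝ) * y^2) :=
    setIntegral_le_integral (integrable_exp_neg_mul_sq (by norm_num))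
      (ae_of_all _ (fun y => (Real.exp_pos _).le))
  have h4 : ∫ y : ℝ, Real.exp (-(1/4:ℝ) * y^2) = 2 * Real.sqrt π := by
    rw [integral_gaussian]
    rw [show π / (1/4:ℝ) = 2^2 * π by ring, Real.sqrt_mul (by positivity),
      Real.sqrt_sq (by norm_num)]
  calc Qf t ≤ _ := h1
    _ = _ := h2
    _ ≤ Real.exp (-t^2/4) * (2 * Real.sqrt π) := by
        exact mul_le_mul_of_nonneg_left (h4 ▸ h3) (Real.exp_pos _).le
    _ = 2 * Real.sqrt π * Real.exp (-t^2/4) := by ring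

lemma tD_le (t : ℝ) (ht : 0 ≤ t) : t * Real.exp (-t^2/4) ≤ 1 := by
  have h1 : t ≤ Real.exp (t^2/4) := by
    have := Real.add_one_le_exp (t^2/4)
    nlinarith [sq_nonneg (t - 2)]
  have h2 : Real.exp (-t^2/4) = (Real.exp (t^2/4))⁻¹ := by
    rw [← Real.exp_neg]; ring_nf
  rw [h2]
  rw [mul_inv_le_iff₀ (Real.exp_pos _), one_mul]
  exact h1

lemma Qf_hasDerivAt {t : ℝ} (ht : 0 < t) : HasDerivAt Qf (-(Real.exp (-t^2/2))) t := by
  have hG : ∀ u : ℝ, HasDerivAt (fun u => Qf 0 - ∫ y in (0:ℝ)..u, Real.exp (-y^2/2))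
      (-(Real.exp (-u^2/2))) u := by
    intro u
    exact (intervalIntegral.integral_hasDerivAt_right (intE.intervalIntegrable)
      intE.aestronglyMeasurable.stronglyMeasurableAtFilter
      (Real.continuous_exp.comp (by continuity)).continuousAt).const_sub _
  refine (hG t).congr_of_eventuallyEq ?_
  filter_upwards [isOpen_Ioi.mem_nhds ht] with u hu
  exact Qf_eq u (le_of_lt hu)

lemma Qf_contWithin : ContinuousWithinAt Qf (Set.Ici 0) 0 := by
  have hG : Continuous (fun u => Qf 0 - ∫ y in (0:ℝ)..u, Real.exp (-y^2/2)) := by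
    have : ∀ u : ℝ, HasDerivAt (fun u => Qf 0 - ∫ y in (0:ℝ)..u, Real.exp (-y^2/2))
        (-(Real.exp (-u^2/2))) u := by
      intro u
      exact (intervalIntegral.integral_hasDerivAt_right (intE.intervalIntegrable)
        intE.aestronglyMeasurable.stronglyMeasurableAtFilter
        (Real.continuous_exp.comp (by continuity)).continuousAt).const_sub _
    exact continuous_iff_continuousAt.2 (fun u => (this u).continuousAt)
  exact (hG.continuousAt.continuousWithinAt).congr (fun y hy => Qf_eq y hy) (Qf_eq 0 le_rfl)

lemma Qf_contOn : ContinuousOn Qf (Set.Ici 0) := by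
  intro t ht
  rcases eq_or_lt_of_le (Set.mem_Ici.mp ht) with h | h
  · exact h ▸ Qf_contWithin
  · exact (Qf_hasDerivAt h).continuousAt.continuousWithinAt

lemma D_le_one (t : ℝ) : Real.exp (-t^2/4) ≤ 1 := by
  rw [show (1:ℝ) = Real.exp 0 by simp, Real.exp_le_exp]
  nlinarith [sq_nonneg t]

lemma E_le_D (t : ℝ) : Real.exp (-t^2/2) ≤ Real.exp (-t^2/4) := by
  rw [Real.exp_le_exp]; nlinarith [sq_nonneg t]

lemma limD : Filter.Tendsto (fun t : ℝ => Real.exp (-t^2/4)) Filter.atTop (𝓝 0) := by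
  have h1 : Filter.Tendsto (fun t : ℝ => -t^2/4) Filter.atTop Filter.atBot := by
    have h2 : Filter.Tendsto (fun t : ℝ => t^2) Filter.atTop Filter.atTop :=
      tendsto_pow_atTop two_ne_zero
    have h3 := h2.atTop_div_const (by norm_num : (0:ℝ) < 4)
    have : (fun t : ℝ => -t^2/4) = (fun t : ℝ => -(t^2/4)) := by ext t; ring
    rw [this]
    exact Filter.tendsto_neg_atBot_iff.mpr h3
  exact Real.tendsto_exp_atBot.comp h1

lemma intD (c : ℝ) : IntegrableOn (fun t : ℝ => c * Real.exp (-t^2/4)) (Set.Ioi 0) := by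
  have : (fun t : ℝ => c * Real.exp (-t^2/4)) = (fun t : ℝ => c * Real.exp (-(1/4:ℝ)*t^2)) := by
    ext t; ring_nf
  rw [this]
  exact ((integrable_exp_neg_mul_sq (by norm_num)).const_mul c).integrableOn

lemma Qf_cube_le (t : ℝ) (ht : 0 ≤ t) :
    Qf t^3 ≤ (2*Real.sqrt π)^3 * Real.exp (-t^2/4) := by
  set K := 2*Real.sqrt π with hKdef
  set D := Real.exp (-t^2/4) with hDdef
  have hK : 0 ≤ K := by positivity
  have hD0 : 0 ≤ D := (Real.exp_pos _).le
  have hD1 : D ≤ 1 := D_le_one t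
  have h1 : Qf t^3 ≤ (K*D)^3 := pow_le_pow_left₀ (Qf_nonneg t) (Qf_le t ht) 3
  have hDD : D * D ≤ 1 := by nlinarith
  calc Qf t^3 ≤ (K*D)^3 := h1
    _ = (K^3*D) * (D*D) := by ring
    _ ≤ (K^3*D) * 1 := mul_le_mul_of_nonneg_left hDD (by positivity)
    _ = K^3 * D := by ring

lemma tEQ2_le (t : ℝ) (ht : 0 ≤ t) :
    t * Real.exp (-t^2/2) * Qf t^2 ≤ (2*Real.sqrt π)^2 * Real.exp (-t^2/4) := by
  set K := 2*Real.sqrt π with hKdef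
  set D := Real.exp (-t^2/4) with hDdef
  have hK : 0 ≤ K := by positivity
  have hD0 : 0 < D := Real.exp_pos _
  have hD1 : D ≤ 1 := D_le_one t
  have hE : Real.exp (-t^2/2) ≤ D := E_le_D t
  have hE0 : 0 ≤ Real.exp (-t^2/2) := (Real.exp_pos _).le
  have htD : t * D ≤ 1 := tD_le t ht
  have hQ : Qf t ≤ K * D := Qf_le t ht
  have hQ0 : 0 ≤ Qf t := Qf_nonneg t
  calc t * Real.exp (-t^2/2) * Qf t^2 ≤ t * D * (K*D)^2 := by
        apply mul_le_mul (mul_le_mul_of_nonneg_left hE ht) (pow_le_pow_left₀ hQ0 hQ 2)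
          (by positivity) (by positivity)
    _ = (t*D) * (K^2 * (D*D)) := by ring
    _ ≤ 1 * (K^2 * (D*D)) := by
        apply mul_le_mul_of_nonneg_right htD (by positivity)
    _ = (K^2*D) * (D*1) := by ring
    _ ≤ (K^2*D) * (1*1) := by
        apply mul_le_mul_of_nonneg_left (by nlinarith) (by positivity)
    _ = K^2 * D := by ring

lemma E2Q_le (t : ℝ) (ht : 0 ≤ t) :
    (Real.exp (-t^2/2))^2 * Qf t ≤ (2*Real.sqrt π) * Real.exp (-t^2/4) := by
  set K := 2*Real.sqrt π with hKdef
  set D := Real.exp (-t^2/4) with hDdef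
  have hK : 0 ≤ K := by positivity
  have hD0 : 0 < D := Real.exp_pos _
  have hD1 : D ≤ 1 := D_le_one t
  have hE : Real.exp (-t^2/2) ≤ D := E_le_D t
  have hE0 : 0 ≤ Real.exp (-t^2/2) := (Real.exp_pos _).le
  have hQ : Qf t ≤ K * D := Qf_le t ht
  have hQ0 : 0 ≤ Qf t := Qf_nonneg t
  calc (Real.exp (-t^2/2))^2 * Qf t ≤ D^2 * (K*D) :=
        mul_le_mul (pow_le_pow_left₀ hE0 hE 2) hQ hQ0 (by positivity)
    _ = (K*D) * (D*D) := by ring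
    _ ≤ (K*D) * 1 := mul_le_mul_of_nonneg_left (by nlinarith) (by positivity)
    _ = K * D := by ring

lemma contOnIoi : ContinuousOn Qf (Set.Ioi 0) := Qf_contOn.mono Set.Ioi_subset_Ici_self

lemma intQ3 : IntegrableOn (fun t => Qf t^3) (Set.Ioi (0:ℝ)) := by
  refine Integrable.mono' (intD ((2*Real.sqrt π)^3)) ?_ ?_
  · exact ((contOnIoi.pow 3).aestronglyMeasurable measurableSet_Ioi)
  · filter_upwards [ae_restrict_mem measurableSet_Ioi] with t ht
    rw [Real.norm_eq_abs, abs_of_nonneg (pow_nonneg (Qf_nonneg t) 3)]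
    exact Qf_cube_le t (le_of_lt ht)

lemma inttEQ2 : IntegrableOn (fun t => t * Real.exp (-t^2/2) * Qf t^2) (Set.Ioi (0:ℝ)) := by
  refine Integrable.mono' (intD ((2*Real.sqrt π)^2)) ?_ ?_
  · exact ((continuousOn_id.mul (Real.continuous_exp.comp (by continuity)).continuousOn).mul
      (contOnIoi.pow 2)).aestronglyMeasurable measurableSet_Ioi
  · filter_upwards [ae_restrict_mem measurableSet_Ioi] with t ht
    rw [Real.norm_eq_abs, abs_of_nonneg (mul_nonneg (mul_nonneg (le_of_lt ht) (Real.exp_pos _).le)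
      (pow_nonneg (Qf_nonneg t) 2))]
    exact tEQ2_le t (le_of_lt ht)

lemma intE2Q : IntegrableOn (fun t => (Real.exp (-t^2/2))^2 * Qf t) (Set.Ioi (0:ℝ)) := by
  refine Integrable.mono' (intD (2*Real.sqrt π)) ?_ ?_
  · exact (((Real.continuous_exp.comp (by continuity)).pow 2).continuousOn.mul
      contOnIoi).aestronglyMeasurable measurableSet_Ioi
  · filter_upwards [ae_restrict_mem measurableSet_Ioi] with t ht
    rw [Real.norm_eq_abs, abs_of_nonneg (mul_nonneg (pow_nonneg (Real.exp_pos _).le 2)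
      (Qf_nonneg t))]
    exact E2Q_le t (le_of_lt ht)

lemma lim_tQ3 : Filter.Tendsto (fun t => t * Qf t^3) Filter.atTop (𝓝 0) := by
  have hg : Filter.Tendsto (fun t : ℝ => (2*Real.sqrt π)^3 *
      (Real.exp (-t^2/4) * Real.exp (-t^2/4))) Filter.atTop (𝓝 0) := by
    have := (limD.mul limD).const_mul ((2*Real.sqrt π)^3)
    simpa using this
  refine squeeze_zero' ?_ ?_ hg
  · filter_upwards [Filter.eventually_ge_atTop (0:ℝ)] with t ht
    exact mul_nonneg ht (pow_nonneg (Qf_nonneg t) 3)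
  · filter_upwards [Filter.eventually_ge_atTop (0:ℝ)] with t ht
    set K := 2*Real.sqrt π with hKdef
    set D := Real.exp (-t^2/4) with hDdef
    have hK : 0 ≤ K := by positivity
    have hD0 : 0 < D := Real.exp_pos _
    have htD : t * D ≤ 1 := tD_le t ht
    have hQ : Qf t ≤ K * D := Qf_le t ht
    have hQ0 : 0 ≤ Qf t := Qf_nonneg t
    calc t * Qf t^3 ≤ t * (K*D)^3 :=
          mul_le_mul_of_nonneg_left (pow_le_pow_left₀ hQ0 hQ 3) ht
      _ = (t*D) * (K^3 * (D*D)) := by ring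
      _ ≤ 1 * (K^3 * (D*D)) := mul_le_mul_of_nonneg_right htD (by positivity)
      _ = K^3 * (D*D) := by ring

lemma lim_EQ2 : Filter.Tendsto (fun t => Real.exp (-t^2/2) * Qf t^2) Filter.atTop (𝓝 0) := by
  have hg : Filter.Tendsto (fun t : ℝ => (2*Real.sqrt π)^2 * Real.exp (-t^2/4))
      Filter.atTop (𝓝 0) := by
    have := limD.const_mul ((2*Real.sqrt π)^2)
    simpa using this
  refine squeeze_zero' ?_ ?_ hg
  · filter_upwards [Filter.eventually_ge_atTop (0:ℝ)] with t ht
    exact mul_nonneg (Real.exp_pos _).le (pow_nonneg (Qf_nonneg t) 2)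
  · filter_upwards [Filter.eventually_ge_atTop (0:ℝ)] with t ht
    set K := 2*Real.sqrt π with hKdef
    set D := Real.exp (-t^2/4) with hDdef
    have hK : 0 ≤ K := by positivity
    have hD0 : 0 < D := Real.exp_pos _
    have hQ : Qf t ≤ K * D := Qf_le t ht
    have hQ0 : 0 ≤ Qf t := Qf_nonneg t
    calc Real.exp (-t^2/2) * Qf t^2 ≤ D * (K*D)^2 :=
          mul_le_mul (E_le_D t) (pow_le_pow_left₀ hQ0 hQ 2) (by positivity) hD0.le
      _ = (K^2*D) * (D*D) := by ring
      _ ≤ (K^2*D) * 1 := mul_le_mul_of_nonneg_left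
          (by nlinarith [D_le_one t]) (by positivity)
      _ = K^2 * D := by ring

lemma ibpA : ∫ t in Set.Ioi (0:ℝ),
    (Qf t^3 - 3*(t * Real.exp (-t^2/2) * Qf t^2)) = 0 := by
  have key := integral_Ioi_of_hasDerivAt_of_tendsto
    (f := fun t => t * Qf t^3)
    (f' := fun t => Qf t^3 - 3*(t * Real.exp (-t^2/2) * Qf t^2)) (a := 0) (m := 0)
    ?_ ?_ ?_ ?_
  · rw [key]; simp
  · exact continuousWithinAt_id.mul (Qf_contWithin.pow 3)
  · intro x hx
    have h := (hasDerivAt_id x).mul ((Qf_hasDerivAt hx).pow 3)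
    refine h.congr_deriv ?_
    push_cast
    simp only [id_eq, Pi.pow_apply]
    ring
  · exact intQ3.sub (inttEQ2.const_mul 3)
  · exact lim_tQ3

lemma ibpB : ∫ t in Set.Ioi (0:ℝ),
    (t * Real.exp (-t^2/2) * Qf t^2 + 2*((Real.exp (-t^2/2))^2 * Qf t)) = π/2 := by
  have key := integral_Ioi_of_hasDerivAt_of_tendsto
    (f := fun t => -(Real.exp (-t^2/2) * Qf t^2))
    (f' := fun t => t * Real.exp (-t^2/2) * Qf t^2 + 2*((Real.exp (-t^2/2))^2 * Qf t))
    (a := 0) (m := 0) ?_ ?_ ?_ ?_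
  · rw [key]
    simp only [neg_zero, zero_sub, neg_neg]
    rw [Qf_zero]
    rw [Real.sq_sqrt (by positivity : (0:ℝ) ≤ π/2)]
    simp
  · refine ContinuousWithinAt.neg (ContinuousWithinAt.mul ?_ (Qf_contWithin.pow 2))
    exact ((Real.continuous_exp.comp (by continuity : Continuous fun t : ℝ => -t^2/2)).continuousAt).continuousWithinAt
  · intro x hx
    have hE : HasDerivAt (fun t : ℝ => Real.exp (-t^2/2)) (Real.exp (-x^2/2) * (-x)) x := by
      have h1 : HasDerivAt (fun t : ℝ => -t^2/2) (-x) x := by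
        have := ((hasDerivAt_pow 2 x).neg).div_const 2
        refine this.congr_deriv ?_
        push_cast; ring
      exact h1.exp
    have h := (hE.mul ((Qf_hasDerivAt hx).pow 2)).neg
    refine h.congr_deriv ?_
    push_cast
    simp only [Pi.pow_apply]
    ring
  · exact inttEQ2.add (intE2Q.const_mul 2)
  · simpa using lim_EQ2.neg

lemma limE (a : ℝ) (ha : 0 < a) :
    Filter.Tendsto (fun t : ℝ => Real.exp (-(a*t^2))) Filter.atTop (𝓝 0) := by
  have h1 : Filter.Tendsto (fun t : ℝ => -(a*t^2)) Filter.atTop Filter.atBot := by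
    refine Filter.tendsto_neg_atBot_iff.mpr ?_
    exact (tendsto_pow_atTop two_ne_zero).const_mul_atTop ha
  exact Real.tendsto_exp_atBot.comp h1

lemma inner_int (a : ℝ) (ha : 0 < a) :
    ∫ t in Set.Ioi (0:ℝ), t * Real.exp (-(a*t^2)) = (2*a)⁻¹ := by
  have key := integral_Ioi_of_hasDerivAt_of_tendsto
    (f := fun t => -((2*a)⁻¹ * Real.exp (-(a*t^2))))
    (f' := fun t => t * Real.exp (-(a*t^2))) (a := 0) (m := 0) ?_ ?_ ?_ ?_
  · rw [key]; simp
  · exact Continuous.continuousWithinAt (by continuity)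
  · intro x hx
    have h1 : HasDerivAt (fun t : ℝ => -(a*t^2)) (-(a*(2*x))) x := by
      have := ((hasDerivAt_pow 2 x).const_mul a).neg
      refine this.congr_deriv ?_
      push_cast; ring
    have h := (h1.exp.const_mul ((2*a)⁻¹)).neg
    refine h.congr_deriv ?_
    field_simp
  · have : (fun t : ℝ => t * Real.exp (-(a*t^2))) = (fun t : ℝ => t * Real.exp (-a*t^2)) := by
      ext t; ring_nf
    rw [this]
    exact (integrable_mul_exp_neg_mul_sq ha).integrableOn
  · have := (limE a ha).const_mul ((2*a)⁻¹)
    simpa using this.neg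

lemma arctan_int :
    ∫ s in Set.Ioi (1:ℝ), ((1:ℝ) + s^2/2)⁻¹ / 2 = Real.arctan (Real.sqrt 2) / Real.sqrt 2 := by
  have hs2 : (0:ℝ) < Real.sqrt 2 := by positivity
  have key := integral_Ioi_of_hasDerivAt_of_nonneg
    (g := fun s => (Real.sqrt 2)⁻¹ * Real.arctan (s / Real.sqrt 2))
    (g' := fun s => ((1:ℝ) + s^2/2)⁻¹ / 2) (a := 1)
    (l := (Real.sqrt 2)⁻¹ * (π/2)) ?_ ?_ ?_ ?_
  · rw [key]
    rw [show (1:ℝ) / Real.sqrt 2 = (Real.sqrt 2)⁻¹ by rw [one_div]]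
    rw [Real.arctan_inv_of_pos hs2]
    field_simp
    ring
  · exact Continuous.continuousWithinAt (by continuity)
  · intro x hx
    have h1 : HasDerivAt (fun s : ℝ => s / Real.sqrt 2) ((Real.sqrt 2)⁻¹) x := by
      simpa using (hasDerivAt_id x).div_const (Real.sqrt 2)
    have h := (h1.arctan).const_mul ((Real.sqrt 2)⁻¹)
    refine h.congr_deriv ?_
    have h2 : (x / Real.sqrt 2)^2 = x^2/2 := by
      rw [div_pow, Real.sq_sqrt (by norm_num : (0:ℝ) ≤ 2)]
    rw [h2]
    have h3 : ((1:ℝ) + x^2/2) ≠ 0 := by positivity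
    field_simp
    nlinarith [Real.sq_sqrt (show (0:ℝ) ≤ 2 by norm_num)]
  · intro x hx
    positivity
  · have harg : Filter.Tendsto (fun s : ℝ => s / Real.sqrt 2) Filter.atTop Filter.atTop :=
      Filter.tendsto_id.atTop_div_const hs2
    have := (Real.tendsto_arctan_atTop.mono_right nhdsWithin_le_nhds).comp harg
    exact this.const_mul _

lemma Qf_subst (t : ℝ) (ht : 0 < t) :
    Qf t = t * ∫ s in Set.Ioi (1:ℝ), Real.exp (-(t*s)^2/2) := by
  have h := integral_comp_mul_left_Ioi (fun y => Real.exp (-y^2/2)) 1 ht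
  simp only [smul_eq_mul, mul_one] at h
  rw [h]
  unfold Qf
  field_simp

lemma Fmeas : Continuous (fun p : ℝ × ℝ => p.1 * Real.exp (-((1+p.2^2/2)*p.1^2))) := by
  continuity

lemma pointC (t : ℝ) (ht : 0 < t) :
    (Real.exp (-t^2/2))^2 * Qf t
      = ∫ s in Set.Ioi (1:ℝ), t * Real.exp (-((1+s^2/2)*t^2)) := by
  rw [Qf_subst t ht]
  have h1 : (Real.exp (-t^2/2))^2 * (t * ∫ s in Set.Ioi (1:ℝ), Real.exp (-(t*s)^2/2))
      = ((Real.exp (-t^2/2))^2 * t) * ∫ s in Set.Ioi (1:ℝ), Real.exp (-(t*s)^2/2) := by ring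
  rw [h1, ← integral_const_mul]
  refine setIntegral_congr_fun measurableSet_Ioi (fun s hs => ?_)
  have h2 : (Real.exp (-t^2/2))^2 = Real.exp (-t^2) := by
    rw [sq, ← Real.exp_add]; ring_nf
  rw [h2, mul_comm (Real.exp (-t^2)) t, mul_assoc, ← Real.exp_add]
  congr 1
  ring

lemma intF : Integrable (Function.uncurry (fun t s => t * Real.exp (-((1+s^2/2)*t^2))))
    ((volume.restrict (Set.Ioi (0:ℝ))).prod (volume.restrict (Set.Ioi (1:ℝ)))) := by
  have hms : AEStronglyMeasurable
      (Function.uncurry (fun t s => t * Real.exp (-((1+s^2/2)*t^2))))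
      ((volume.restrict (Set.Ioi (0:ℝ))).prod (volume.restrict (Set.Ioi (1:ℝ)))) :=
    Fmeas.aestronglyMeasurable
  rw [integrable_prod_iff hms]
  constructor
  · filter_upwards [ae_restrict_mem measurableSet_Ioi] with t ht
    have h : (fun s : ℝ => t * Real.exp (-((1+s^2/2)*t^2)))
        = (fun s : ℝ => (t * Real.exp (-t^2)) * Real.exp (-(t^2/2)*s^2)) := by
      ext s
      rw [mul_assoc, ← Real.exp_add]
      congr 1
      ring
    have ht0 : t ≠ 0 := ne_of_gt ht
    simp only [Function.uncurry]
    rw [h]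
    exact ((integrable_exp_neg_mul_sq (by positivity : (0:ℝ) < t^2/2)).const_mul
      _).integrableOn
  · refine Integrable.congr intE2Q ?_
    filter_upwards [ae_restrict_mem measurableSet_Ioi] with t ht
    rw [pointC t ht]
    refine setIntegral_congr_fun measurableSet_Ioi (fun s hs => ?_)
    simp only [Function.uncurry]
    rw [Real.norm_eq_abs, abs_of_nonneg (mul_nonneg (le_of_lt ht) (Real.exp_pos _).le)]

lemma stepC : ∫ t in Set.Ioi (0:ℝ), (Real.exp (-t^2/2))^2 * Qf t
    = Real.arctan (Real.sqrt 2) / Real.sqrt 2 := by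
  have h1 : ∫ t in Set.Ioi (0:ℝ), (Real.exp (-t^2/2))^2 * Qf t
      = ∫ t in Set.Ioi (0:ℝ), ∫ s in Set.Ioi (1:ℝ), t * Real.exp (-((1+s^2/2)*t^2)) :=
    setIntegral_congr_fun measurableSet_Ioi (fun t ht => pointC t ht)
  rw [h1, integral_integral_swap intF]
  have h2 : ∫ s in Set.Ioi (1:ℝ), (∫ t in Set.Ioi (0:ℝ), t * Real.exp (-((1+s^2/2)*t^2)))
      = ∫ s in Set.Ioi (1:ℝ), ((1:ℝ) + s^2/2)⁻¹ / 2 := by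
    refine setIntegral_congr_fun measurableSet_Ioi (fun s hs => ?_)
    rw [inner_int ((1:ℝ)+s^2/2) (by positivity)]
    rw [mul_inv]
    ring
  rw [h2, arctan_int]

lemma Jval : ∫ t in Set.Ioi (0:ℝ), Qf t^3
    = 3*(π/2) - 3*Real.sqrt 2 * Real.arctan (Real.sqrt 2) := by
  have hA := ibpA
  rw [integral_sub intQ3 (inttEQ2.const_mul 3), MeasureTheory.integral_const_mul, sub_eq_zero] at hA
  have hB := ibpB
  rw [integral_add inttEQ2 (intE2Q.const_mul 2), MeasureTheory.integral_const_mul, stepC] at hB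
  rw [hA, eq_sub_of_add_eq hB]
  have h2 : Real.sqrt 2 * Real.sqrt 2 = 2 := Real.mul_self_sqrt (by norm_num)
  have hs2 : Real.sqrt 2 ≠ 0 := by positivity
  have hs2' : (0:ℝ) < Real.sqrt 2 := by positivity
  have h4 : Real.arctan (Real.sqrt 2) / Real.sqrt 2
      = Real.sqrt 2 * Real.arctan (Real.sqrt 2) / 2 := by
    rw [div_eq_div_iff hs2 (by norm_num : (2:ℝ) ≠ 0)]
    linear_combination (-Real.arctan (Real.sqrt 2)) * h2
  rw [h4]
  ring

open ProbabilityTheory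

lemma gauss_tail (t : ℝ) (ht : 0 < t) :
    (gaussianReal 0 1) {x : ℝ | t < |x|}
      = ENNReal.ofReal (2 * (Real.sqrt (2*π))⁻¹ * Qf t) := by
  rw [gaussianReal_apply_eq_integral 0 one_ne_zero]
  congr 1
  have hAeq : {x : ℝ | t < |x|} = Set.Iio (-t) ∪ Set.Ioi t := by
    ext x
    simp only [Set.mem_setOf_eq, Set.mem_union, Set.mem_Iio, Set.mem_Ioi, lt_abs]
    constructor
    · rintro (h | h)
      · right; exact h
      · left; linarith
    · rintro (h | h)
      · right; linarith
      · left; exact h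
  have hdisj : Disjoint (Set.Iio (-t)) (Set.Ioi t) := by
    refine Set.disjoint_left.mpr (fun x hx hx' => ?_)
    simp only [Set.mem_Iio] at hx
    simp only [Set.mem_Ioi] at hx'
    linarith
  rw [hAeq, setIntegral_union hdisj measurableSet_Ioi
    (integrable_gaussianPDFReal 0 1).integrableOn (integrable_gaussianPDFReal 0 1).integrableOn]
  have hsymm : ∫ x in Set.Iio (-t), gaussianPDFReal 0 1 x
      = ∫ x in Set.Ioi t, gaussianPDFReal 0 1 x := by
    rw [← MeasureTheory.integral_Iic_eq_integral_Iio, ← integral_comp_neg_Ioi]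
    refine setIntegral_congr_fun measurableSet_Ioi (fun x hx => ?_)
    simp only [gaussianPDFReal]
    congr 1
    ring
  have hIoi : ∫ x in Set.Ioi t, gaussianPDFReal 0 1 x = (Real.sqrt (2*π))⁻¹ * Qf t := by
    unfold Qf
    rw [← integral_const_mul]
    refine setIntegral_congr_fun measurableSet_Ioi (fun x hx => ?_)
    simp only [gaussianPDFReal]
    norm_num
  rw [hsymm, hIoi]
  ring

lemma final_algebra :
    (2 * (Real.sqrt (2*π))⁻¹)^3 * (3*(π/2) - 3*Real.sqrt 2*Real.arctan (Real.sqrt 2))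
      = (12 / π ^ ((3:ℝ)/2)) * (Real.sqrt 2 * π / 4 - Real.arctan (Real.sqrt 2)) := by
  have ha : Real.sqrt 2 * Real.sqrt 2 = 2 := Real.mul_self_sqrt (by norm_num)
  have hb : Real.sqrt π * Real.sqrt π = π := Real.mul_self_sqrt Real.pi_pos.le
  have hab : Real.sqrt (2*π) = Real.sqrt 2 * Real.sqrt π := Real.sqrt_mul (by norm_num) π
  have hπ32 : π ^ ((3:ℝ)/2) = π * Real.sqrt π := by
    rw [Real.sqrt_eq_rpow, show ((3:ℝ)/2) = 1 + 1/2 by norm_num,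
      Real.rpow_add Real.pi_pos, Real.rpow_one]
  have h2 : (0:ℝ) < Real.sqrt 2 := by positivity
  have hp : (0:ℝ) < Real.sqrt π := Real.sqrt_pos.mpr Real.pi_pos
  rw [hπ32, hab]
  have hcube : (2 * (Real.sqrt 2 * Real.sqrt π)⁻¹)^3
      = 2*Real.sqrt 2/(π * Real.sqrt π) := by
    have h3 : (2 * (Real.sqrt 2 * Real.sqrt π)⁻¹)^3 = 8 / (Real.sqrt 2^3 * Real.sqrt π^3) := by
      field_simp
      ring
    have ha3 : Real.sqrt 2^3 = 2 * Real.sqrt 2 := by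
      rw [pow_succ, sq]; rw [ha]
    have hb3 : Real.sqrt π^3 = π * Real.sqrt π := by
      rw [pow_succ, sq]; rw [hb]
    rw [h3, ha3, hb3, div_eq_div_iff (by positivity) (by positivity)]
    linear_combination (-4*π*Real.sqrt π)*ha
  rw [hcube]
  rw [div_mul_eq_mul_div, div_mul_eq_mul_div, div_eq_div_iff (by positivity) (by positivity)]
  linear_combination (-6*Real.arctan (Real.sqrt 2)*π*Real.sqrt π)*ha

theorem stmt_1 {Ω : Type*} [MeasurableSpace Ω] (P : Measure Ω) [IsProbabilityMeasure P]
    (Y₁ Y₂ Y₃ : Ω → ℝ) (hm₁ : Measurable Y₁) (hm₂ : Measurable Y₂) (hm₃ : Measurable Y₃)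
    (h₁ : Measure.map Y₁ P = gaussianReal 0 1)
    (h₂ : Measure.map Y₂ P = gaussianReal 0 1)
    (h₃ : Measure.map Y₃ P = gaussianReal 0 1)
    (hindep : iIndepFun ![Y₁, Y₂, Y₃] P) :
    ∫ ω, min (|Y₁ ω|) (min (|Y₂ ω|) (|Y₃ ω|)) ∂P
      = (12 / Real.pi ^ ((3:ℝ)/2)) * (Real.sqrt 2 * Real.pi / 4 - Real.arctan (Real.sqrt 2)) := by
  have hmM : Measurable (fun ω => min (|Y₁ ω|) (min (|Y₂ ω|) (|Y₃ ω|))) :=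
    (hm₁.abs).min ((hm₂.abs).min (hm₃.abs))
  have hMnn : ∀ ω, 0 ≤ min (|Y₁ ω|) (min (|Y₂ ω|) (|Y₃ ω|)) :=
    fun ω => le_min (abs_nonneg _) (le_min (abs_nonneg _) (abs_nonneg _))
  have hgauss : Integrable (fun x : ℝ => x) (gaussianReal 0 1) := by
    rw [gaussianReal_of_var_ne_zero _ one_ne_zero]
    rw [integrable_withDensity_iff (measurable_gaussianPDF _ _)
      (ae_of_all _ (fun x => ENNReal.ofReal_lt_top))]
    have heq : (fun x : ℝ => x * ((gaussianPDF 0 1 x).toReal))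
        = fun x : ℝ => (Real.sqrt (2*π))⁻¹ * (x * Real.exp (-(1/2:ℝ)*x^2)) := by
      ext x
      rw [gaussianPDF, ENNReal.toReal_ofReal (gaussianPDFReal_nonneg _ _ _)]
      simp only [gaussianPDFReal, NNReal.coe_one, mul_one, sub_zero]
      rw [show -x^2/(2:ℝ) = -(1/2:ℝ)*x^2 by ring]
      ring
    rw [heq]
    exact (integrable_mul_exp_neg_mul_sq (by norm_num : (0:ℝ) < 1/2)).const_mul _
  have hint1 : Integrable Y₁ P := by
    have h := integrable_map_measure (μ := P) (f := Y₁) (g := fun x : ℝ => x)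
      aestronglyMeasurable_id hm₁.aemeasurable
    rw [h₁] at h
    exact h.mp hgauss
  have hintM : Integrable (fun ω => min (|Y₁ ω|) (min (|Y₂ ω|) (|Y₃ ω|))) P := by
    refine (hint1.abs).mono hmM.aestronglyMeasurable (ae_of_all _ (fun ω => ?_))
    rw [Real.norm_eq_abs, Real.norm_eq_abs, abs_abs, abs_of_nonneg (hMnn ω)]
    exact min_le_left _ _
  rw [hintM.integral_eq_integral_meas_lt (ae_of_all _ hMnn)]
  have hpt : ∀ t ∈ Set.Ioi (0:ℝ),
      (P {a | t < min (|Y₁ a|) (min (|Y₂ a|) (|Y₃ a|))}).toReal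
        = (2 * (Real.sqrt (2*π))⁻¹)^3 * Qf t^3 := by
    intro t ht
    have ht' : 0 < t := ht
    have hA : MeasurableSet {x : ℝ | t < |x|} :=
      measurableSet_lt measurable_const (measurable_id.abs)
    have hset : {a | t < min (|Y₁ a|) (min (|Y₂ a|) (|Y₃ a|))}
        = ⋂ i, (![Y₁,Y₂,Y₃] i ⁻¹' {x : ℝ | t < |x|}) := by
      ext ω
      simp only [Set.mem_setOf_eq, lt_min_iff, Set.mem_iInter, Set.mem_preimage]
      constructor
      · rintro ⟨ha1, ha2, ha3⟩ i
        fin_cases i <;> simpa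
      · intro h
        exact ⟨by simpa using h 0, by simpa using h 1, by simpa using h 2⟩
    rw [hset, hindep.meas_iInter (fun i => ⟨{x : ℝ | t < |x|}, hA, rfl⟩)]
    rw [Fin.prod_univ_three]
    simp only [Matrix.cons_val_zero, Matrix.cons_val_one, Matrix.head_cons,
      Matrix.cons_val_two, Matrix.tail_cons]
    rw [← Measure.map_apply hm₁ hA, ← Measure.map_apply hm₂ hA, ← Measure.map_apply hm₃ hA,
      h₁, h₂, h₃, gauss_tail t ht']
    have hr : 0 ≤ 2 * (Real.sqrt (2*π))⁻¹ * Qf t :=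
      mul_nonneg (by positivity) (Qf_nonneg t)
    rw [← ENNReal.ofReal_mul hr, ← ENNReal.ofReal_mul (mul_nonneg hr hr),
      ENNReal.toReal_ofReal (mul_nonneg (mul_nonneg hr hr) hr)]
    ring
  simp_rw [measureReal_def]
  rw [setIntegral_congr_fun measurableSet_Ioi hpt, integral_const_mul, Jval, final_algebra]
end

section
/- The triple integral ∫∫∫_{[0,∞)³} min(x, y, z)·e^{-(x²+y²+z²)/2} dx dy dz equals 6·(arctan(1) − (1/√2)·arctan(√2)). -/
open MeasureTheory Real Set Filter

noncomputable def gg (x : ℝ) : ℝ := Real.exp (-x^2/2)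
noncomputable def GG (x : ℝ) : ℝ := ∫ t in Set.Ioi x, gg t
noncomputable def CC (x : ℝ) : ℝ := 1 - gg x + x * GG x
noncomputable def AA (x : ℝ) : ℝ := ∫ t in (0:ℝ)..x, gg t * CC t

lemma gg_cont : Continuous gg := by
  unfold gg; fun_prop

lemma gg_pos (x : ℝ) : 0 < gg x := Real.exp_pos _

lemma gg_le_one (x : ℝ) : gg x ≤ 1 := by
  rw [gg, ← Real.exp_zero]
  apply Real.exp_le_exp.2
  nlinarith [sq_nonneg x]

lemma gg_eq (x : ℝ) : gg x = Real.exp (-(1/2 : ℝ) * x ^ 2) := by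
  rw [gg]; ring_nf

lemma gg_integrable : Integrable gg := by
  have := integrable_exp_neg_mul_sq (b := (1/2:ℝ)) (by norm_num)
  exact this.congr (Filter.EventuallyEq.of_eq (funext fun x => (gg_eq x).symm))

lemma gg_integrableOn (s : Set ℝ) : IntegrableOn gg s := gg_integrable.integrableOn

lemma gg_tendsto : Tendsto gg atTop (nhds 0) := by
  have h : Tendsto (fun x : ℝ => -x^2/2) atTop atBot := by
    apply Tendsto.atBot_div_const (by norm_num)
    simpa using (tendsto_pow_atTop (n := 2) (by norm_num)).neg
  exact Real.tendsto_exp_atBot.comp h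

lemma gg_hasDeriv (x : ℝ) : HasDerivAt gg (-x * gg x) x := by
  have h : HasDerivAt (fun x : ℝ => -x^2/2) (-x) x := by
    have := ((hasDerivAt_pow 2 x).neg.div_const 2)
    simpa using this.congr_deriv (by ring)
  show HasDerivAt (fun x => Real.exp (-x^2/2)) (-x * Real.exp (-x^2/2)) x
  exact h.exp.congr_deriv (by ring)

lemma xgg_integrable : Integrable (fun x => x * gg x) := by
  have := integrable_mul_exp_neg_mul_sq (b := (1/2:ℝ)) (by norm_num)
  exact this.congr (Filter.EventuallyEq.of_eq (funext fun x => by rw [gg_eq]))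

lemma GG_sub {a b : ℝ} (h : a ≤ b) : GG a = (∫ t in Set.Ioc a b, gg t) + GG b := by
  rw [GG, GG, ← setIntegral_union (Set.Ioc_disjoint_Ioi le_rfl) measurableSet_Ioi
    (gg_integrableOn _) (gg_integrableOn _), Set.Ioc_union_Ioi_eq_Ioi h]

lemma GG_eq (a : ℝ) : GG a = GG 0 - ∫ t in (0:ℝ)..a, gg t := by
  rcases le_total 0 a with h | h
  · rw [intervalIntegral.integral_of_le h, GG_sub h]; ring
  · rw [intervalIntegral.integral_symm, intervalIntegral.integral_of_le h, GG_sub h]; ring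

lemma GG_hasDeriv (a : ℝ) : HasDerivAt GG (-gg a) a := by
  have h1 : HasDerivAt (fun u => ∫ t in (0:ℝ)..u, gg t) (gg a) a :=
    (gg_cont.integral_hasStrictDerivAt 0 a).hasDerivAt
  rw [show GG = fun u => GG 0 - ∫ t in (0:ℝ)..u, gg t from funext GG_eq]
  exact ((hasDerivAt_const a (GG 0)).sub h1).congr_deriv (by ring)

lemma GG_cont : Continuous GG := by
  have : Differentiable ℝ GG := fun a => (GG_hasDeriv a).differentiableAt
  exact this.continuous

lemma GG_nonneg (a : ℝ) : 0 ≤ GG a :=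
  setIntegral_nonneg measurableSet_Ioi (fun x _ => (gg_pos x).le)

lemma GG_mono {a b : ℝ} (h : a ≤ b) : GG b ≤ GG a := by
  rw [GG_sub h]
  have : 0 ≤ ∫ t in Set.Ioc a b, gg t :=
    setIntegral_nonneg measurableSet_Ioc (fun x _ => (gg_pos x).le)
  linarith

lemma GG_tendsto : Tendsto GG atTop (nhds 0) := by
  have h := intervalIntegral_tendsto_integral_Ioi 0 (gg_integrableOn (Set.Ioi 0)) tendsto_id
  rw [show GG = fun a => GG 0 - ∫ t in (0:ℝ)..a, gg t from funext GG_eq]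
  have h2 := (tendsto_const_nhds (x := GG 0) (f := atTop (α := ℝ))).sub h
  rw [show GG 0 - ∫ t in Set.Ioi (0:ℝ), gg t = 0 from by rw [GG]; ring] at h2
  exact h2

lemma sgg_Ioi (a : ℝ) : ∫ s in Set.Ioi a, s * gg s = gg a := by
  have := integral_Ioi_of_hasDerivAt_of_tendsto' (f := fun s => -gg s)
    (f' := fun s => s * gg s) (a := a) (m := 0)
    (fun x _ => by exact (gg_hasDeriv x).neg.congr_deriv (by ring))
    (xgg_integrable.integrableOn) (by simpa using gg_tendsto.neg)
  simpa using this

lemma mul_GG_le {a : ℝ} (ha : 0 ≤ a) : a * GG a ≤ gg a := by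
  rw [← sgg_Ioi a, GG, ← integral_const_mul]
  apply setIntegral_mono_on ((gg_integrableOn _).const_mul a)
    ((xgg_integrable.integrableOn)) measurableSet_Ioi
  intro x hx
  have : 0 < x := lt_of_le_of_lt ha hx
  nlinarith [(gg_pos x), le_of_lt (Set.mem_Ioi.mp hx)]

lemma CC_cont : Continuous CC := by
  unfold CC
  exact ((continuous_const.sub gg_cont).add (continuous_id.mul GG_cont))

lemma CC_nonneg {x : ℝ} (hx : 0 ≤ x) : 0 ≤ CC x := by
  have h1 := gg_le_one x
  have h2 := GG_nonneg x
  unfold CC; nlinarith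

lemma CC_le_two {x : ℝ} (hx : 0 ≤ x) : CC x ≤ 2 := by
  have h1 := mul_GG_le hx
  have h2 := (gg_pos x).le
  have h3 := gg_le_one x
  unfold CC; nlinarith

lemma CC_hasDeriv (x : ℝ) : HasDerivAt CC (GG x) x := by
  have h : HasDerivAt CC ((0 - (-x * gg x)) + (1 * GG x + x * (-gg x))) x :=
    ((hasDerivAt_const x (1:ℝ)).sub (gg_hasDeriv x)).add
      ((hasDerivAt_id x).mul (GG_hasDeriv x))
  simpa using h.congr_deriv (by ring)

lemma AA_hasDeriv (x : ℝ) : HasDerivAt AA (gg x * CC x) x :=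
  ((gg_cont.mul CC_cont).integral_hasStrictDerivAt 0 x).hasDerivAt

lemma AA_nonneg {x : ℝ} (hx : 0 ≤ x) : 0 ≤ AA x := by
  rw [AA]
  apply intervalIntegral.integral_nonneg hx
  intro t ht
  exact mul_nonneg (gg_pos t).le (CC_nonneg ht.1)

lemma AA_le {x : ℝ} (hx : 0 ≤ x) : AA x ≤ 2 * GG 0 := by
  rw [AA]
  calc ∫ t in (0:ℝ)..x, gg t * CC t ≤ ∫ t in (0:ℝ)..x, 2 * gg t := by
        apply intervalIntegral.integral_mono_on hx
          ((gg_cont.mul CC_cont).intervalIntegrable 0 x)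
          ((continuous_const.mul gg_cont).intervalIntegrable 0 x)
        intro t ht
        have := CC_le_two ht.1
        show gg t * CC t ≤ 2 * gg t
        nlinarith [gg_pos t, CC_nonneg ht.1]
    _ = 2 * ∫ t in (0:ℝ)..x, gg t := intervalIntegral.integral_const_mul 2 gg
    _ ≤ 2 * GG 0 := by
        have h1 : (∫ t in (0:ℝ)..x, gg t) ≤ GG 0 := by
          rw [intervalIntegral.integral_of_le hx]
          have := GG_sub hx
          have := GG_nonneg x
          linarith [GG_sub hx, GG_nonneg x]
        linarith

lemma inner_z {m : ℝ} (hm : 0 ≤ m) : ∫ z in Set.Ioi (0:ℝ), min m z * gg z = CC m := by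
  have hsplit : Set.Ioc (0:ℝ) m ∪ Set.Ioi m = Set.Ioi 0 := Set.Ioc_union_Ioi_eq_Ioi hm
  have hcont : Continuous (fun z => min m z * gg z) :=
    (continuous_const.min continuous_id).mul gg_cont
  have hint1 : IntegrableOn (fun z => min m z * gg z) (Set.Ioc 0 m) :=
    hcont.integrableOn_Ioc
  have hint2 : IntegrableOn (fun z => min m z * gg z) (Set.Ioi m) := by
    apply IntegrableOn.congr_fun ((gg_integrableOn (Set.Ioi m)).const_mul m) ?_ measurableSet_Ioi
    intro z hz
    simp [min_eq_left (le_of_lt (Set.mem_Ioi.mp hz))]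
  rw [← hsplit, setIntegral_union Set.Ioc_disjoint_Ioi_same measurableSet_Ioi hint1 hint2]
  have e1 : ∫ z in Set.Ioc (0:ℝ) m, min m z * gg z = 1 - gg m := by
    rw [setIntegral_congr_fun measurableSet_Ioc
      (g := fun z => z * gg z) (fun z hz => by simp [min_eq_right hz.2]),
      ← intervalIntegral.integral_of_le hm]
    have := intervalIntegral.integral_eq_sub_of_hasDerivAt
      (f := fun z => -gg z) (f' := fun z => z * gg z)
      (fun t _ => by exact (gg_hasDeriv t).neg.congr_deriv (by ring))
      ((continuous_id.mul gg_cont).intervalIntegrable 0 m)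
    rw [this]
    simp only [gg]
    norm_num
    ring
  have e2 : ∫ z in Set.Ioi m, min m z * gg z = m * GG m := by
    rw [setIntegral_congr_fun measurableSet_Ioi
      (g := fun z => m * gg z) (fun z hz => by simp [min_eq_left (le_of_lt (Set.mem_Ioi.mp hz))]),
      integral_const_mul, GG]
  rw [e1, e2, CC]

lemma AA_cont : Continuous AA := by
  have : Differentiable ℝ AA := fun a => (AA_hasDeriv a).differentiableAt
  exact this.continuous

lemma inner_y {x : ℝ} (hx : 0 ≤ x) :
    ∫ y in Set.Ioi (0:ℝ), gg y * CC (min x y) = AA x + CC x * GG x := by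
  have hsplit : Set.Ioc (0:ℝ) x ∪ Set.Ioi x = Set.Ioi 0 := Set.Ioc_union_Ioi_eq_Ioi hx
  have hcont : Continuous (fun y => gg y * CC (min x y)) :=
    gg_cont.mul (CC_cont.comp (continuous_const.min continuous_id))
  have hint1 : IntegrableOn (fun y => gg y * CC (min x y)) (Set.Ioc 0 x) :=
    hcont.integrableOn_Ioc
  have hint2 : IntegrableOn (fun y => gg y * CC (min x y)) (Set.Ioi x) := by
    apply IntegrableOn.congr_fun ((gg_integrableOn (Set.Ioi x)).mul_const (CC x))
      ?_ measurableSet_Ioi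
    intro y hy
    simp [min_eq_left (le_of_lt (Set.mem_Ioi.mp hy))]
  rw [← hsplit, setIntegral_union Set.Ioc_disjoint_Ioi_same measurableSet_Ioi hint1 hint2]
  have e1 : ∫ y in Set.Ioc (0:ℝ) x, gg y * CC (min x y) = AA x := by
    rw [setIntegral_congr_fun measurableSet_Ioc
      (g := fun y => gg y * CC y) (fun y hy => by simp [min_eq_right hy.2]),
      AA, intervalIntegral.integral_of_le hx]
  have e2 : ∫ y in Set.Ioi x, gg y * CC (min x y) = CC x * GG x := by
    rw [setIntegral_congr_fun measurableSet_Ioi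
      (g := fun y => gg y * CC x) (fun y hy => by simp [min_eq_left (le_of_lt (Set.mem_Ioi.mp hy))]),
      integral_mul_const, GG, mul_comm]
  rw [e1, e2]

lemma exp_sq_tendsto {b : ℝ} (hb : 0 < b) :
    Tendsto (fun x : ℝ => Real.exp (-b * x^2)) atTop (nhds 0) := by
  have h : Tendsto (fun x : ℝ => -b * x^2) atTop atBot := by
    have h2 : Tendsto (fun x : ℝ => x^2) atTop atTop := tendsto_pow_atTop (by norm_num)
    exact Tendsto.const_mul_atTop_of_neg (by linarith) h2
  exact Real.tendsto_exp_atBot.comp h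

lemma xexp_Ioi {c : ℝ} (hc : 0 < c) :
    ∫ x in Set.Ioi (0:ℝ), x * Real.exp (-c * x^2) = 1/(2*c) := by
  have hder : ∀ x ∈ Set.Ici (0:ℝ),
      HasDerivAt (fun x => -Real.exp (-c*x^2)/(2*c)) (x * Real.exp (-c*x^2)) x := by
    intro x _
    have h1 : HasDerivAt (fun x : ℝ => -c*x^2) (-c*(2*x)) x := by
      simpa using ((hasDerivAt_pow 2 x).const_mul (-c))
    have h2 := (h1.exp.neg).div_const (2*c)
    apply h2.congr_deriv
    field_simp
  have := integral_Ioi_of_hasDerivAt_of_tendsto' hder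
    (integrable_mul_exp_neg_mul_sq hc).integrableOn
    (by simpa using ((exp_sq_tendsto hc).neg).div_const (2*c))
  rw [this]
  field_simp
  norm_num

lemma GG_scale {x : ℝ} (hx : 0 < x) : GG x = x * ∫ u in Set.Ioi (1:ℝ), gg (x*u) := by
  rw [MeasureTheory.integral_comp_mul_left_Ioi gg 1 hx]
  rw [smul_eq_mul, mul_one, GG]
  field_simp

lemma inv_two_add_sq_Ioi :
    ∫ u in Set.Ioi (1:ℝ), 1/(2+u^2) = Real.arctan (Real.sqrt 2) / Real.sqrt 2 := by
  have hs2 : (0:ℝ) < Real.sqrt 2 := Real.sqrt_pos.2 (by norm_num)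
  have hsq : Real.sqrt 2 ^ 2 = 2 := Real.sq_sqrt (by norm_num)
  have hder : ∀ u ∈ Set.Ici (1:ℝ),
      HasDerivAt (fun u => Real.arctan (u / Real.sqrt 2) / Real.sqrt 2) (1/(2+u^2)) u := by
    intro u _
    have h1 : HasDerivAt (fun u : ℝ => u / Real.sqrt 2) (1 / Real.sqrt 2) u := by
      simpa using (hasDerivAt_id u).div_const (Real.sqrt 2)
    have h2 := ((Real.hasDerivAt_arctan (u / Real.sqrt 2)).comp u h1).div_const (Real.sqrt 2)
    apply h2.congr_deriv
    rw [div_pow, hsq]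
    field_simp
    nlinarith [hsq]
  have hint : IntegrableOn (fun u : ℝ => 1/(2+u^2)) (Set.Ioi 1) := by
    apply Integrable.mono' (g := fun u : ℝ => u ^ (-2:ℝ))
      (integrableOn_Ioi_rpow_of_lt (by norm_num) one_pos)
      ((continuous_const.div (by fun_prop) (fun u : ℝ => by positivity)).aestronglyMeasurable)
    apply (ae_restrict_iff' measurableSet_Ioi).2
    apply ae_of_all
    intro u hu
    have hu1 : (1:ℝ) ≤ u := le_of_lt hu
    have h2 : (0:ℝ) < 2 + u^2 := by nlinarith
    have hrp : u ^ (-2:ℝ) = (u^2)⁻¹ := by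
      have h9 : u ^ (2:ℝ) = u ^ (2:ℕ) := by
        rw [← Real.rpow_natCast u 2]; norm_num
      rw [Real.rpow_neg (by linarith : (0:ℝ) ≤ u), h9]
    show ‖1/(2+u^2)‖ ≤ u ^ (-2:ℝ)
    rw [Real.norm_eq_abs, abs_of_nonneg (by positivity), hrp, inv_eq_one_div]
    exact one_div_le_one_div_of_le (by nlinarith) (by nlinarith)
  have htend : Tendsto (fun u : ℝ => Real.arctan (u / Real.sqrt 2) / Real.sqrt 2) atTop
      (nhds ((π/2) / Real.sqrt 2)) := by
    apply Tendsto.div_const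
    have h3 : Tendsto (fun u : ℝ => u / Real.sqrt 2) atTop atTop :=
      Tendsto.atTop_div_const hs2 tendsto_id
    exact (Real.tendsto_arctan_atTop.mono_right nhdsWithin_le_nhds).comp h3
  rw [integral_Ioi_of_hasDerivAt_of_tendsto' hder hint htend]
  have harc : Real.arctan (1 / Real.sqrt 2) = π/2 - Real.arctan (Real.sqrt 2) := by
    rw [one_div, Real.arctan_inv_of_pos hs2]
  rw [harc]
  ring

noncomputable def FF (x u : ℝ) : ℝ := x * Real.exp (-(1+u^2/2)*x^2)

lemma FF_cont : Continuous (Function.uncurry FF) := by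
  unfold Function.uncurry FF
  fun_prop

lemma FF_eq (x u : ℝ) : FF x u = (x * Real.exp (-x^2)) * Real.exp (-(x^2/2) * u^2) := by
  rw [FF, show -(1+u^2/2)*x^2 = -x^2 + (-(x^2/2) * u^2) by ring, Real.exp_add, mul_assoc]

lemma FF_nonneg {x : ℝ} (hx : 0 ≤ x) (u : ℝ) : 0 ≤ FF x u := by
  rw [FF]; positivity

lemma FF_integrable : Integrable (Function.uncurry FF)
    ((volume.restrict (Set.Ioi 0)).prod (volume.restrict (Set.Ioi 1))) := by
  rw [integrable_prod_iff FF_cont.aestronglyMeasurable]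
  constructor
  · apply (ae_restrict_iff' measurableSet_Ioi).2 (ae_of_all _ ?_)
    intro x hx
    have hx0 : (0:ℝ) < x := hx
    have h : (fun u => Function.uncurry FF (x, u))
        = fun u => (x * Real.exp (-x^2)) * Real.exp (-(x^2/2) * u^2) :=
      funext fun u => FF_eq x u
    rw [h]
    exact ((integrable_exp_neg_mul_sq (by positivity : (0:ℝ) < x^2/2)).integrableOn.const_mul _)
  · apply Integrable.mono' (g := fun x => Real.sqrt (2*π) * Real.exp (-1 * x^2))
      (((integrable_exp_neg_mul_sq one_pos).const_mul _).integrableOn)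
      (FF_cont.aestronglyMeasurable.norm.integral_prod_right')
    apply (ae_restrict_iff' measurableSet_Ioi).2 (ae_of_all _ ?_)
    intro x hx
    have hx0 : (0:ℝ) < x := hx
    have hval : ∀ u, ‖Function.uncurry FF (x, u)‖
        = (x * Real.exp (-x^2)) * Real.exp (-(x^2/2) * u^2) := by
      intro u
      show ‖FF x u‖ = _
      rw [Real.norm_of_nonneg (FF_nonneg hx0.le u), FF_eq]
    have hle : (∫ u in Set.Ioi (1:ℝ), ‖Function.uncurry FF (x, u)‖)
        ≤ Real.sqrt (2*π) * Real.exp (-1 * x^2) := by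
      calc (∫ u in Set.Ioi (1:ℝ), ‖Function.uncurry FF (x, u)‖)
          = ∫ u in Set.Ioi (1:ℝ), (x * Real.exp (-x^2)) * Real.exp (-(x^2/2) * u^2) := by
            exact integral_congr_ae (ae_of_all _ hval)
        _ ≤ ∫ u in Set.Ioi (0:ℝ), (x * Real.exp (-x^2)) * Real.exp (-(x^2/2) * u^2) := by
            apply setIntegral_mono_set
              ((integrable_exp_neg_mul_sq (by positivity : (0:ℝ) < x^2/2)).integrableOn.const_mul _)
              (ae_of_all _ (fun u => by positivity))
              (HasSubset.Subset.eventuallyLE (Set.Ioi_subset_Ioi (by norm_num)))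
        _ = (x * Real.exp (-x^2)) * (Real.sqrt (π/(x^2/2))/2) := by
            rw [integral_const_mul, integral_gaussian_Ioi]
        _ ≤ Real.sqrt (2*π) * Real.exp (-1 * x^2) := by
            have h1 : Real.sqrt (π/(x^2/2)) = Real.sqrt (2*π) / x := by
              rw [show π/(x^2/2) = (2*π)/x^2 by ring,
                Real.sqrt_div (by positivity) , Real.sqrt_sq hx0.le]
            rw [h1]
            rw [show (x * Real.exp (-x^2)) * (Real.sqrt (2*π)/x/2)
              = Real.sqrt (2*π) * Real.exp (-x^2) * (x / x) / 2 by ring,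
              div_self hx0.ne', mul_one]
            have : Real.exp (-1 * x^2) = Real.exp (-x^2) := by norm_num
            rw [this]
            nlinarith [Real.exp_pos (-x^2), Real.sqrt_nonneg (2*π)]
    calc ‖∫ u in Set.Ioi (1:ℝ), ‖Function.uncurry FF (x, u)‖‖
        = ∫ u in Set.Ioi (1:ℝ), ‖Function.uncurry FF (x, u)‖ := by
          rw [Real.norm_of_nonneg]
          exact integral_nonneg (fun u => norm_nonneg _)
      _ ≤ _ := hle

lemma J_val : ∫ x in Set.Ioi (0:ℝ), gg x^2 * GG x
    = Real.arctan (Real.sqrt 2) / Real.sqrt 2 := by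
  have step1 : ∀ x ∈ Set.Ioi (0:ℝ), gg x^2 * GG x = ∫ u in Set.Ioi (1:ℝ), FF x u := by
    intro x hx
    have hx0 : (0:ℝ) < x := hx
    have hpt : ∀ u : ℝ, (gg x^2 * x) * gg (x*u) = FF x u := by
      intro u
      rw [FF_eq, gg, gg, ← Real.exp_nat_mul]
      rw [show ((2:ℕ):ℝ) * (-x^2/2) = -x^2 by push_cast; ring]
      rw [show -(x*u)^2/2 = -(x^2/2) * u^2 by ring]
      ring
    calc gg x^2 * GG x = (gg x^2 * x) * ∫ u in Set.Ioi (1:ℝ), gg (x*u) := by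
          rw [GG_scale hx0]; ring
      _ = ∫ u in Set.Ioi (1:ℝ), (gg x^2 * x) * gg (x*u) := (integral_const_mul _ _).symm
      _ = ∫ u in Set.Ioi (1:ℝ), FF x u := by
          congr 1
          funext u
          exact hpt u
  rw [setIntegral_congr_fun measurableSet_Ioi step1, integral_integral_swap FF_integrable]
  have step2 : ∀ u ∈ Set.Ioi (1:ℝ), (∫ x in Set.Ioi (0:ℝ), FF x u) = 1/(2+u^2) := by
    intro u _
    have hc : (0:ℝ) < 1 + u^2/2 := by positivity
    have := xexp_Ioi hc
    rw [show (fun x => FF x u) = fun x => x * Real.exp (-(1+u^2/2)*x^2) from rfl, this]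
    rw [show 2*(1+u^2/2) = 2+u^2 by ring]
  rw [setIntegral_congr_fun measurableSet_Ioi step2, inv_two_add_sq_Ioi]

noncomputable def Psi (x : ℝ) : ℝ := -(GG x * AA x) - GG x^2 - 2 * (gg x * GG x^2)

lemma Psi_hasDeriv (x : ℝ) :
    HasDerivAt Psi (gg x * (AA x + CC x * GG x) + 6 * (gg x^2 * GG x)) x := by
  have h1 : HasDerivAt (fun x => GG x * AA x)
      (-gg x * AA x + GG x * (gg x * CC x)) x := (GG_hasDeriv x).mul (AA_hasDeriv x)
  have h2 : HasDerivAt (fun x => GG x^2) ((2:ℕ) * GG x ^ 1 * -gg x) x := (GG_hasDeriv x).pow 2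
  have h3 : HasDerivAt (fun x => gg x * GG x^2)
      (-x * gg x * GG x^2 + gg x * ((2:ℕ) * GG x ^ 1 * -gg x)) x :=
    (gg_hasDeriv x).mul ((GG_hasDeriv x).pow 2)
  have h := (h1.neg.sub h2).sub (h3.const_mul 2)
  have he : Psi = fun x => -(GG x * AA x) - GG x^2 - 2 * (gg x * GG x^2) := rfl
  rw [he]
  apply h.congr_deriv
  rw [CC]
  push_cast
  ring

lemma Psi_tendsto : Tendsto Psi atTop (nhds 0) := by
  have t1 : Tendsto (fun x => GG x * AA x) atTop (nhds 0) := by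
    apply tendsto_of_tendsto_of_tendsto_of_le_of_le' tendsto_const_nhds
      (by simpa using GG_tendsto.mul_const (2 * GG 0))
    · filter_upwards [eventually_ge_atTop (0:ℝ)] with x hx
      exact mul_nonneg (GG_nonneg x) (AA_nonneg hx)
    · filter_upwards [eventually_ge_atTop (0:ℝ)] with x hx
      exact mul_le_mul_of_nonneg_left (AA_le hx) (GG_nonneg x)
  have t2 : Tendsto (fun x => GG x^2) atTop (nhds 0) := by
    have := GG_tendsto.mul GG_tendsto
    simp only [mul_zero] at this
    refine this.congr (fun x => ?_)
    ring
  have t3 : Tendsto (fun x => gg x * GG x^2) atTop (nhds 0) := by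
    apply tendsto_of_tendsto_of_tendsto_of_le_of_le' tendsto_const_nhds t2
    · filter_upwards with x
      exact mul_nonneg (gg_pos x).le (sq_nonneg _)
    · filter_upwards with x
      nlinarith [gg_le_one x, gg_pos x, sq_nonneg (GG x)]
  have := (t1.neg.sub t2).sub (t3.const_mul 2)
  simp only [neg_zero, sub_zero, mul_zero] at this
  exact this

lemma f_cont : Continuous (fun x => gg x * (AA x + CC x * GG x)) :=
  gg_cont.mul (AA_cont.add (CC_cont.mul GG_cont))

lemma f_integrableOn : IntegrableOn (fun x => gg x * (AA x + CC x * GG x)) (Set.Ioi 0) := by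
  apply Integrable.mono' (g := fun x => (4 * GG 0) * gg x)
    ((gg_integrableOn _).const_mul _)
    f_cont.aestronglyMeasurable.restrict
  apply (ae_restrict_iff' measurableSet_Ioi).2 (ae_of_all _ ?_)
  intro x hx
  have hx0 : (0:ℝ) < x := hx
  have h1 := AA_le hx0.le
  have h2 := AA_nonneg hx0.le
  have h3 := CC_le_two hx0.le
  have h4 := CC_nonneg hx0.le
  have h5 := GG_mono hx0.le
  have h6 := GG_nonneg x
  have h7 := gg_pos x
  have h8 := gg_le_one x
  have h9 := GG_nonneg 0
  have hcg : CC x * GG x ≤ 2 * GG 0 := mul_le_mul h3 h5 h6 (by norm_num)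
  have hsum : AA x + CC x * GG x ≤ 4 * GG 0 := by linarith
  have hnn : (0:ℝ) ≤ AA x + CC x * GG x := add_nonneg h2 (mul_nonneg h4 h6)
  rw [Real.norm_of_nonneg (mul_nonneg h7.le hnn)]
  calc gg x * (AA x + CC x * GG x) ≤ gg x * (4 * GG 0) :=
        mul_le_mul_of_nonneg_left hsum h7.le
    _ = 4 * GG 0 * gg x := by ring

lemma g2G_integrableOn : IntegrableOn (fun x => gg x^2 * GG x) (Set.Ioi 0) := by
  apply Integrable.mono' (g := fun x => GG 0 * gg x)
    ((gg_integrableOn _).const_mul _)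
    ((gg_cont.pow 2).mul GG_cont).aestronglyMeasurable.restrict
  apply (ae_restrict_iff' measurableSet_Ioi).2 (ae_of_all _ ?_)
  intro x hx
  have hx0 : (0:ℝ) < x := hx
  have h5 := GG_mono hx0.le
  have h6 := GG_nonneg x
  have h7 := gg_pos x
  have h8 := gg_le_one x
  show ‖gg x^2 * GG x‖ ≤ GG 0 * gg x
  rw [Real.norm_of_nonneg (mul_nonneg (pow_nonneg h7.le 2) h6)]
  calc gg x^2 * GG x ≤ gg x * GG 0 :=
        mul_le_mul (by nlinarith) h5 h6 h7.le
    _ = GG 0 * gg x := mul_comm _ _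

lemma GG0_sq : GG 0 ^ 2 = π/2 := by
  have : GG 0 = Real.sqrt (π/(1/2))/2 := by
    rw [GG, ← integral_gaussian_Ioi (1/2)]
    apply setIntegral_congr_fun measurableSet_Ioi
    intro x _
    rw [gg_eq]
  rw [this, div_pow, Real.sq_sqrt (by positivity)]
  ring

lemma outer_val : ∫ x in Set.Ioi (0:ℝ), gg x * (AA x + CC x * GG x)
    = 3*(π/2) - 6*(Real.arctan (Real.sqrt 2) / Real.sqrt 2) := by
  have hsum : ∫ x in Set.Ioi (0:ℝ),
      (gg x * (AA x + CC x * GG x) + 6 * (gg x^2 * GG x)) = 0 - Psi 0 :=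
    integral_Ioi_of_hasDerivAt_of_tendsto' (fun x _ => Psi_hasDeriv x)
      (f_integrableOn.add (g2G_integrableOn.const_mul 6)) Psi_tendsto
  rw [integral_add f_integrableOn (g2G_integrableOn.const_mul 6)] at hsum
  rw [integral_const_mul, J_val] at hsum
  have hPsi0 : Psi 0 = -(3*(π/2)) := by
    have hA0 : AA 0 = 0 := intervalIntegral.integral_same
    have hg0 : gg 0 = 1 := by rw [gg]; norm_num
    rw [Psi, hA0, hg0]
    nlinarith [GG0_sq]
  rw [hPsi0] at hsum
  linarith

theorem stmt_2 :
    ∫ x in Set.Ioi (0:ℝ), ∫ y in Set.Ioi (0:ℝ), ∫ z in Set.Ioi (0:ℝ),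
        min x (min y z) * Real.exp (-(x ^ 2 + y ^ 2 + z ^ 2) / 2)
      = 6 * (Real.arctan 1 - (1 / Real.sqrt 2) * Real.arctan (Real.sqrt 2)) := by
  have key : ∀ x ∈ Set.Ioi (0:ℝ),
      (∫ y in Set.Ioi (0:ℝ), ∫ z in Set.Ioi (0:ℝ),
        min x (min y z) * Real.exp (-(x ^ 2 + y ^ 2 + z ^ 2) / 2))
      = gg x * (AA x + CC x * GG x) := by
    intro x hx
    have hx0 : (0:ℝ) < x := hx
    have hy : ∀ y ∈ Set.Ioi (0:ℝ),
        (∫ z in Set.Ioi (0:ℝ), min x (min y z) * Real.exp (-(x ^ 2 + y ^ 2 + z ^ 2) / 2))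
        = gg x * (gg y * CC (min x y)) := by
      intro y hy0
      have hpt : ∀ z : ℝ, min x (min y z) * Real.exp (-(x ^ 2 + y ^ 2 + z ^ 2) / 2)
          = (gg x * gg y) * (min (min x y) z * gg z) := by
        intro z
        rw [min_assoc,
          show Real.exp (-(x ^ 2 + y ^ 2 + z ^ 2) / 2) = gg x * gg y * gg z from by
            rw [gg, gg, gg, ← Real.exp_add, ← Real.exp_add]; congr 1; ring]
        ring
      calc (∫ z in Set.Ioi (0:ℝ), min x (min y z) * Real.exp (-(x ^ 2 + y ^ 2 + z ^ 2) / 2))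
          = ∫ z in Set.Ioi (0:ℝ), (gg x * gg y) * (min (min x y) z * gg z) := by
            congr 1; funext z; exact hpt z
        _ = (gg x * gg y) * CC (min x y) := by
            rw [integral_const_mul, inner_z (le_min hx0.le (le_of_lt hy0))]
        _ = gg x * (gg y * CC (min x y)) := by ring
    calc (∫ y in Set.Ioi (0:ℝ), ∫ z in Set.Ioi (0:ℝ),
          min x (min y z) * Real.exp (-(x ^ 2 + y ^ 2 + z ^ 2) / 2))
        = ∫ y in Set.Ioi (0:ℝ), gg x * (gg y * CC (min x y)) :=
          setIntegral_congr_fun measurableSet_Ioi hy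
      _ = gg x * ∫ y in Set.Ioi (0:ℝ), gg y * CC (min x y) := integral_const_mul _ _
      _ = gg x * (AA x + CC x * GG x) := by rw [inner_y hx0.le]
  rw [setIntegral_congr_fun measurableSet_Ioi key, outer_val, Real.arctan_one]
  ring
end

section
/- Let (f₁, f₂) be a centered Gaussian vector with f₁, f₂ each standard Gaussian and correlation ρ ∈ [0,1], and let a ∈ (0,1]. Then E[min(|f₁|, a|f₂|)] = (2(1+a) − √(1+a²+2aρ) − √(1+a²−2aρ)) / √(2π). -/
open MeasureTheory ProbabilityTheory Real
open Set
open scoped NNReal ENNReal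

-- full-line integrals
lemma int_abs_exp {b : ℝ} (hb : 0 < b) : ∫ x : ℝ, |x| * Real.exp (-b * x ^ 2) = 1 / b := by
  have h1 : ∫ x : ℝ, |x| * Real.exp (-b * x ^ 2) = ∫ x : ℝ, |x| * Real.exp (-b * |x| ^ 2) := by
    congr 1; ext x; rw [sq_abs]
  rw [h1, integral_comp_abs (f := fun x => x * Real.exp (-b * x ^ 2))]
  have h2 : ∫ x in Ioi (0:ℝ), x * Real.exp (-b * x ^ 2)
      = ∫ x in Ioi (0:ℝ), x ^ (1:ℝ) * Real.exp (-b * x ^ (2:ℝ)) := by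
    refine setIntegral_congr_fun measurableSet_Ioi (fun x hx => ?_)
    rw [Real.rpow_one, Real.rpow_two]
  rw [h2, integral_rpow_mul_exp_neg_mul_rpow zero_lt_two (by norm_num) hb]
  norm_num [Real.Gamma_one]
  rw [Real.rpow_neg_one]
  field_simp

lemma int_sq_exp {b : ℝ} (hb : 0 < b) :
    ∫ x : ℝ, x ^ 2 * Real.exp (-b * x ^ 2) = Real.sqrt π / (2 * b ^ (3/2 : ℝ)) := by
  have h1 : ∫ x : ℝ, x ^ 2 * Real.exp (-b * x ^ 2)
      = ∫ x : ℝ, |x| ^ 2 * Real.exp (-b * |x| ^ 2) := by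
    congr 1; ext x; rw [sq_abs]
  rw [h1, integral_comp_abs (f := fun x => x ^ 2 * Real.exp (-b * x ^ 2))]
  have h2 : ∫ x in Ioi (0:ℝ), x ^ 2 * Real.exp (-b * x ^ 2)
      = ∫ x in Ioi (0:ℝ), x ^ (2:ℝ) * Real.exp (-b * x ^ (2:ℝ)) := by
    refine setIntegral_congr_fun measurableSet_Ioi (fun x hx => ?_)
    rw [Real.rpow_two]
  rw [h2, integral_rpow_mul_exp_neg_mul_rpow zero_lt_two (by norm_num) hb]
  have hG : Real.Gamma ((2 + 1) / 2) = Real.sqrt π / 2 := by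
    have : ((2:ℝ) + 1) / 2 = 1/2 + 1 := by norm_num
    rw [this, Real.Gamma_add_one (by norm_num), Real.Gamma_one_half_eq]
    ring
  rw [hG]
  rw [show (-((2:ℝ)+1)/2) = -(3/2 : ℝ) by norm_num, Real.rpow_neg hb.le]
  field_simp

lemma integral_gaussianReal_eq (v : ℝ≥0) (hv : v ≠ 0) (g : ℝ → ℝ) :
    ∫ x, g x ∂(gaussianReal 0 v) = ∫ x, gaussianPDFReal 0 v x * g x := by
  rw [gaussianReal_of_var_ne_zero _ hv, gaussianPDF_def]
  have h : (fun x => ENNReal.ofReal (gaussianPDFReal 0 v x))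
      = fun x => ((Real.toNNReal (gaussianPDFReal 0 v x) : ℝ≥0) : ℝ≥0∞) := rfl
  rw [h, integral_withDensity_eq_integral_smul (measurable_gaussianPDFReal 0 v).real_toNNReal]
  congr 1; ext x
  rw [NNReal.smul_def, Real.coe_toNNReal _ (gaussianPDFReal_nonneg 0 v x), smul_eq_mul]

lemma integrable_gaussianReal_iff (v : ℝ≥0) (hv : v ≠ 0) (g : ℝ → ℝ) :
    Integrable g (gaussianReal 0 v) ↔ Integrable (fun x => gaussianPDFReal 0 v x * g x) := by
  rw [gaussianReal_of_var_ne_zero _ hv, gaussianPDF_def]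
  have h : (fun x => ENNReal.ofReal (gaussianPDFReal 0 v x))
      = fun x => ((Real.toNNReal (gaussianPDFReal 0 v x) : ℝ≥0) : ℝ≥0∞) := rfl
  rw [h, integrable_withDensity_iff_integrable_smul (measurable_gaussianPDFReal 0 v).real_toNNReal]
  constructor <;> intro hi <;> refine hi.congr (Filter.Eventually.of_forall fun x => ?_) <;>
    simp only [NNReal.smul_def, Real.coe_toNNReal _ (gaussianPDFReal_nonneg 0 v x), smul_eq_mul]

lemma pdf_form (v : ℝ≥0) (hv : v ≠ 0) (x : ℝ) :
    gaussianPDFReal 0 v x = (Real.sqrt (2 * π * v))⁻¹ * Real.exp (-(2 * (v:ℝ))⁻¹ * x ^ 2) := by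
  rw [gaussianPDFReal]
  congr 1
  rw [sub_zero]
  congr 1
  have hv' : (0:ℝ) < v := by positivity
  field_simp

lemma integrable_abs_exp {b : ℝ} (hb : 0 < b) :
    Integrable (fun x : ℝ => |x| * Real.exp (-b * x ^ 2)) := by
  refine (integrable_mul_exp_neg_mul_sq hb).abs.congr (Filter.Eventually.of_forall fun x => ?_)
  simp [abs_mul, abs_of_pos (Real.exp_pos (-b * x ^ 2))]

lemma integrable_sq_exp {b : ℝ} (hb : 0 < b) :
    Integrable (fun x : ℝ => x ^ 2 * Real.exp (-b * x ^ 2)) := by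
  refine (integrable_rpow_mul_exp_neg_mul_sq hb (s := 2) (by norm_num)).congr
    (Filter.Eventually.of_forall fun x => ?_)
  norm_num [show ((2:ℝ)) = ((2:ℕ):ℝ) by norm_num, Real.rpow_natCast]

lemma abs_integrable_gauss (v : ℝ≥0) : Integrable (fun x => |x|) (gaussianReal 0 v) := by
  by_cases hv : v = 0
  · rw [hv, gaussianReal_zero_var]
    exact (integrable_const _).congr (MeasureTheory.ae_eq_dirac _).symm
  · have hvp : (0:ℝ) < v := by positivity
    have hb : (0:ℝ) < (2 * (v:ℝ))⁻¹ := by positivity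
    refine (integrable_gaussianReal_iff v hv _).2 ?_
    refine ((integrable_abs_exp hb).const_mul ((Real.sqrt (2 * π * v))⁻¹)).congr
      (Filter.Eventually.of_forall fun x => ?_)
    simp only [pdf_form v hv]
    ring

lemma sq_integrable_gauss (v : ℝ≥0) : Integrable (fun x => x ^ 2) (gaussianReal 0 v) := by
  by_cases hv : v = 0
  · rw [hv, gaussianReal_zero_var]
    exact (integrable_const _).congr (MeasureTheory.ae_eq_dirac _).symm
  · have hvp : (0:ℝ) < v := by positivity
    have hb : (0:ℝ) < (2 * (v:ℝ))⁻¹ := by positivity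
    refine (integrable_gaussianReal_iff v hv _).2 ?_
    refine ((integrable_sq_exp hb).const_mul ((Real.sqrt (2 * π * v))⁻¹)).congr
      (Filter.Eventually.of_forall fun x => ?_)
    simp only [pdf_form v hv]
    ring

lemma abs_moment_gauss (v : ℝ≥0) :
    ∫ x, |x| ∂(gaussianReal 0 v) = Real.sqrt (2 * v / π) := by
  by_cases hv : v = 0
  · rw [hv, gaussianReal_zero_var, integral_dirac]
    simp
  · have hvp : (0:ℝ) < v := by positivity
    have hb : (0:ℝ) < (2 * (v:ℝ))⁻¹ := by positivity
    rw [integral_gaussianReal_eq v hv]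
    have h1 : ∫ x, gaussianPDFReal 0 v x * |x|
        = ∫ x, (Real.sqrt (2 * π * v))⁻¹ * (|x| * Real.exp (-(2 * (v:ℝ))⁻¹ * x ^ 2)) := by
      congr 1; ext x; rw [pdf_form v hv]; ring
    rw [h1, integral_const_mul, int_abs_exp hb]
    have h2v : (0:ℝ) < 2 * v := by positivity
    have hs : Real.sqrt (2 * π * (v:ℝ)) = Real.sqrt π * Real.sqrt (2 * v) := by
      rw [show 2 * π * (v:ℝ) = π * (2 * v) by ring, Real.sqrt_mul Real.pi_pos.le]
    rw [hs, Real.sqrt_div h2v.le]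
    have hm : Real.sqrt (2 * (v:ℝ)) * Real.sqrt (2 * (v:ℝ)) = 2 * v :=
      Real.mul_self_sqrt h2v.le
    have hπ : Real.sqrt π ≠ 0 := by positivity
    have h2vs : Real.sqrt (2 * (v:ℝ)) ≠ 0 := by positivity
    rw [one_div, inv_inv, ← hm]
    field_simp
    rw [Real.sqrt_sq (Real.sqrt_nonneg _)]

lemma sq_moment_gauss (v : ℝ≥0) :
    ∫ x, x ^ 2 ∂(gaussianReal 0 v) = v := by
  by_cases hv : v = 0
  · rw [hv, gaussianReal_zero_var, integral_dirac]
    simp [hv]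
  · have hvp : (0:ℝ) < v := by positivity
    have h2v : (0:ℝ) < 2 * v := by positivity
    have hb : (0:ℝ) < (2 * (v:ℝ))⁻¹ := by positivity
    rw [integral_gaussianReal_eq v hv]
    have h1 : ∫ x, gaussianPDFReal 0 v x * x ^ 2
        = ∫ x, (Real.sqrt (2 * π * v))⁻¹ * (x ^ 2 * Real.exp (-(2 * (v:ℝ))⁻¹ * x ^ 2)) := by
      congr 1; ext x; rw [pdf_form v hv]; ring
    rw [h1, integral_const_mul, int_sq_exp hb]
    have hrw : ((2 * (v:ℝ))⁻¹) ^ (3/2 : ℝ) = ((2 * (v:ℝ)) ^ (3/2 : ℝ))⁻¹ := by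
      rw [← Real.rpow_neg_one, ← Real.rpow_neg_one ((2 * (v:ℝ)) ^ (3/2:ℝ)), ← Real.rpow_mul h2v.le,
        ← Real.rpow_mul h2v.le]
      norm_num
    have h32 : (2 * (v:ℝ)) ^ (3/2 : ℝ) = (2 * v) * Real.sqrt (2 * v) := by
      rw [show (3/2 : ℝ) = 1 + 1/2 by norm_num, Real.rpow_add h2v, Real.rpow_one,
        ← Real.sqrt_eq_rpow]
    have hs : Real.sqrt (2 * π * (v:ℝ)) = Real.sqrt π * Real.sqrt (2 * v) := by
      rw [show 2 * π * (v:ℝ) = π * (2 * v) by ring, Real.sqrt_mul Real.pi_pos.le]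
    have hπ : Real.sqrt π ≠ 0 := by positivity
    have h2vs : Real.sqrt (2 * (v:ℝ)) ≠ 0 := by positivity
    rw [hrw, h32, hs]
    have hmul : 2 * ((2 * (v:ℝ)) * Real.sqrt (2*(v:ℝ)))⁻¹ ≠ 0 := by positivity
    have hm : Real.sqrt (2 * (v:ℝ)) * Real.sqrt (2 * (v:ℝ)) = 2 * v :=
      Real.mul_self_sqrt h2v.le
    field_simp

lemma map_abs_fact {Ω : Type*} [MeasurableSpace Ω] (P : Measure Ω) (X : Ω → ℝ)
    (hX : Measurable X) (v : ℝ≥0) (h : Measure.map X P = gaussianReal 0 v) :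
    (∫ ω, |X ω| ∂P = Real.sqrt (2 * v / π)) ∧ Integrable (fun ω => |X ω|) P := by
  constructor
  · rw [← abs_moment_gauss v, ← h,
      integral_map hX.aemeasurable continuous_abs.aestronglyMeasurable]
  · have h1 := abs_integrable_gauss v
    rw [← h] at h1
    exact (integrable_map_measure continuous_abs.aestronglyMeasurable hX.aemeasurable).1 h1

lemma map_sq_fact {Ω : Type*} [MeasurableSpace Ω] (P : Measure Ω) (X : Ω → ℝ)
    (hX : Measurable X) (v : ℝ≥0) (h : Measure.map X P = gaussianReal 0 v) :
    (∫ ω, (X ω) ^ 2 ∂P = v) ∧ Integrable (fun ω => (X ω) ^ 2) P := by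
  constructor
  · rw [← sq_moment_gauss v, ← h, integral_map hX.aemeasurable (by fun_prop)]
  · have h1 := sq_integrable_gauss v
    rw [← h] at h1
    exact (integrable_map_measure (by fun_prop) hX.aemeasurable).1 h1

lemma min_abs_eq (x z : ℝ) : min |x| |z| = |x| + |z| - (|x + z| + |x - z|) / 2 := by
  rcases abs_cases x with ⟨hx, hx'⟩ | ⟨hx, hx'⟩ <;>
    rcases abs_cases z with ⟨hz, hz'⟩ | ⟨hz, hz'⟩ <;>
    rcases abs_cases (x + z) with ⟨hp, hp'⟩ | ⟨hp, hp'⟩ <;>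
    rcases abs_cases (x - z) with ⟨hq, hq'⟩ | ⟨hq, hq'⟩ <;>
    rcases min_cases |x| |z| with ⟨hmn, hmn'⟩ | ⟨hmn, hmn'⟩ <;>
    linarith

lemma sqrt_aux {t : ℝ} (ht : 0 ≤ t) :
    Real.sqrt (2 * t / π) = 2 * Real.sqrt t / Real.sqrt (2 * π) := by
  have hπ : (0:ℝ) < π := Real.pi_pos
  rw [show 2 * t / π = (4 * t) / (2 * π) by field_simp; ring,
    Real.sqrt_div (by positivity), show (4:ℝ) * t = 2 ^ 2 * t by ring,
    Real.sqrt_mul (by positivity), Real.sqrt_sq (by norm_num)]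


theorem stmt_11 {Ω : Type*} [MeasurableSpace Ω] (P : Measure Ω) [IsProbabilityMeasure P]
    (f₁ f₂ : Ω → ℝ) (hm₁ : Measurable f₁) (hm₂ : Measurable f₂)
    (hgauss : ∀ c d : ℝ, ∃ v : NNReal,
      Measure.map (fun ω => c * f₁ ω + d * f₂ ω) P = gaussianReal 0 v)
    (h₁ : Measure.map f₁ P = gaussianReal 0 1)
    (h₂ : Measure.map f₂ P = gaussianReal 0 1)
    (ρ : ℝ) (hρ : ρ ∈ Set.Icc (0:ℝ) 1)
    (hcov : ∫ ω, f₁ ω * f₂ ω ∂P = ρ)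
    (a : ℝ) (ha : a ∈ Set.Ioc (0:ℝ) 1) :
    ∫ ω, min (|f₁ ω|) (a * |f₂ ω|) ∂P
      = (2 * (1 + a) - Real.sqrt (1 + a ^ 2 + 2 * a * ρ)
          - Real.sqrt (1 + a ^ 2 - 2 * a * ρ)) / Real.sqrt (2 * Real.pi) := by
  obtain ⟨hρ0, hρ1⟩ := hρ
  obtain ⟨ha0, ha1⟩ := ha
  -- second moments
  have hsq₁ := map_sq_fact P f₁ hm₁ 1 h₁
  have hsq₂ := map_sq_fact P f₂ hm₂ 1 h₂
  have habs₁ := map_abs_fact P f₁ hm₁ 1 h₁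
  have habs₂ := map_abs_fact P f₂ hm₂ 1 h₂
  -- integrability of the product
  have h12int : Integrable (fun ω => f₁ ω * f₂ ω) P := by
    have hbint : Integrable (fun ω => (f₁ ω ^ 2 + f₂ ω ^ 2) / 2) P :=
      (hsq₁.2.add hsq₂.2).div_const 2
    refine hbint.mono
      ((hm₁.mul hm₂).aestronglyMeasurable) (Filter.Eventually.of_forall fun ω => ?_)
    simp only [Real.norm_eq_abs, abs_mul]
    rw [abs_of_nonneg (by positivity : (0:ℝ) ≤ (f₁ ω ^ 2 + f₂ ω ^ 2) / 2)]
    nlinarith [sq_nonneg (|f₁ ω| - |f₂ ω|), sq_abs (f₁ ω), sq_abs (f₂ ω)]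
  -- identification of variances of linear combinations
  have key : ∀ (s : ℝ) (v : ℝ≥0),
      Measure.map (fun ω => f₁ ω + s * f₂ ω) P = gaussianReal 0 v →
      (v : ℝ) = 1 + s ^ 2 + 2 * s * ρ := by
    intro s v h
    have hXm : Measurable (fun ω => f₁ ω + s * f₂ ω) := hm₁.add (hm₂.const_mul s)
    have hmom := (map_sq_fact P _ hXm v h).1
    have hexp : (fun ω => (f₁ ω + s * f₂ ω) ^ 2)
        = fun ω => (f₁ ω ^ 2 + s ^ 2 * f₂ ω ^ 2) + (2 * s) * (f₁ ω * f₂ ω) := by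
      ext ω; ring
    have i1 : Integrable (fun ω => f₁ ω ^ 2 + s ^ 2 * f₂ ω ^ 2) P :=
      hsq₁.2.add (hsq₂.2.const_mul _)
    have i2 : Integrable (fun ω => (2 * s) * (f₁ ω * f₂ ω)) P := h12int.const_mul _
    rw [hexp, integral_add i1 i2,
      integral_add hsq₁.2 (hsq₂.2.const_mul _), integral_const_mul, integral_const_mul,
      hsq₁.1, hsq₂.1, hcov] at hmom
    rw [← hmom]
    push_cast
    ring
  -- the two linear combinations
  obtain ⟨vp, hvp⟩ := hgauss 1 a
  obtain ⟨vm, hvm⟩ := hgauss 1 (-a)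
  rw [show (fun ω => 1 * f₁ ω + a * f₂ ω) = fun ω => f₁ ω + a * f₂ ω by ext ω; ring] at hvp
  rw [show (fun ω => 1 * f₁ ω + -a * f₂ ω) = fun ω => f₁ ω + (-a) * f₂ ω by ext ω; ring] at hvm
  have hvp' : (vp : ℝ) = 1 + a ^ 2 + 2 * a * ρ := by
    rw [key a vp hvp]
  have hvm' : (vm : ℝ) = 1 + a ^ 2 - 2 * a * ρ := by
    rw [key (-a) vm hvm]; ring
  have hXp : Measurable (fun ω => f₁ ω + a * f₂ ω) := hm₁.add (hm₂.const_mul a)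
  have hXm : Measurable (fun ω => f₁ ω + (-a) * f₂ ω) := hm₁.add (hm₂.const_mul (-a))
  have habsp := map_abs_fact P _ hXp vp hvp
  have habsm := map_abs_fact P _ hXm vm hvm
  -- pointwise identity
  have hptw : (fun ω => min (|f₁ ω|) (a * |f₂ ω|))
      = fun ω => (|f₁ ω| + a * |f₂ ω|)
          - (|f₁ ω + a * f₂ ω| + |f₁ ω + (-a) * f₂ ω|) / 2 := by
    ext ω
    have h1 : a * |f₂ ω| = |a * f₂ ω| := by
      rw [abs_mul, abs_of_pos ha0]
    rw [h1, min_abs_eq (f₁ ω) (a * f₂ ω)]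
    have h2 : f₁ ω - a * f₂ ω = f₁ ω + (-a) * f₂ ω := by ring
    rw [h2]
  have j1 : Integrable (fun ω => |f₁ ω| + a * |f₂ ω|) P :=
    habs₁.2.add (habs₂.2.const_mul a)
  have j2 : Integrable (fun ω => (|f₁ ω + a * f₂ ω| + |f₁ ω + (-a) * f₂ ω|) / 2) P :=
    (habsp.2.add habsm.2).div_const 2
  rw [hptw, integral_sub j1 j2,
    integral_add habs₁.2 (habs₂.2.const_mul a), integral_const_mul, integral_div,
    integral_add habsp.2 habsm.2, habs₁.1, habs₂.1, habsp.1, habsm.1]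
  -- arithmetic
  have hq1 : (0:ℝ) ≤ 1 + a ^ 2 + 2 * a * ρ := by positivity
  have hq2 : (0:ℝ) ≤ 1 + a ^ 2 - 2 * a * ρ := by nlinarith
  have e1 : Real.sqrt (2 * ((1:ℝ≥0):ℝ) / π) = 2 * 1 / Real.sqrt (2 * π) := by
    rw [NNReal.coe_one, sqrt_aux (by norm_num : (0:ℝ) ≤ 1), Real.sqrt_one]
  have e2 : Real.sqrt (2 * (vp:ℝ) / π)
      = 2 * Real.sqrt (1 + a ^ 2 + 2 * a * ρ) / Real.sqrt (2 * π) := by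
    rw [hvp', sqrt_aux hq1]
  have e3 : Real.sqrt (2 * (vm:ℝ) / π)
      = 2 * Real.sqrt (1 + a ^ 2 - 2 * a * ρ) / Real.sqrt (2 * π) := by
    rw [hvm', sqrt_aux hq2]
  rw [e1, e2, e3]
  have hπ : Real.sqrt (2 * π) ≠ 0 := by positivity
  field_simp
  ring
end

section
/- For α, β > 0 and γ real with αβ − γ² > 0 and σ² > 0, the integral J := ∫₀^∞ (∫₀^y x·e^{-(αx²+βy²+2γxy)/(2σ²)} dx) dy equals (√(2π)·σ³/2)·(β/(αβ−γ²))·(1/√β − (β+γ)/(β·√(α+β+2γ))). -/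
open MeasureTheory Real Set Filter Topology

private lemma delta_pos' {α β γ : ℝ} (hα : 0 < α) (hβ : 0 < β) (hγ : α * β - γ ^ 2 > 0) :
    0 < α + β + 2 * γ := by
  nlinarith [sq_nonneg (α - β), sq_nonneg (α + β + 2 * γ)]

private lemma quad_lower {α β γ : ℝ} (hα : 0 < α) (hβ : 0 < β) (hγ : α * β - γ ^ 2 > 0) :
    ∃ c : ℝ, 0 < c ∧ ∀ x y : ℝ, 0 ≤ x → 0 ≤ y →
      c * x ^ 2 + c * y ^ 2 ≤ α * x ^ 2 + β * y ^ 2 + 2 * γ * x * y := by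
  set a := Real.sqrt α with ha
  set b := Real.sqrt β with hb
  have ha2 : a ^ 2 = α := Real.sq_sqrt hα.le
  have hb2 : b ^ 2 = β := Real.sq_sqrt hβ.le
  have ha0 : 0 < a := Real.sqrt_pos.mpr hα
  have hb0 : 0 < b := Real.sqrt_pos.mpr hβ
  have hγab : |γ| < a * b := by
    have h' : |γ| ^ 2 < (a * b) ^ 2 := by rw [sq_abs]; nlinarith
    exact lt_of_pow_lt_pow_left₀ 2 (by positivity) h'
  have hθ : |γ| / (a * b) < 1 := (div_lt_one (by positivity)).mpr hγab
  have hθ0 : 0 ≤ |γ| / (a * b) := by positivity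
  refine ⟨min α β * (1 - |γ| / (a * b)), by nlinarith [lt_min hα hβ], ?_⟩
  intro x y hx hy
  have h1 : 2 * (a * b) * (x * y) ≤ α * x ^ 2 + β * y ^ 2 := by
    nlinarith [sq_nonneg (a * x - b * y)]
  have h2 : -(2 * |γ| * (x * y)) ≤ 2 * γ * x * y := by
    have := neg_abs_le γ
    nlinarith [mul_nonneg hx hy]
  have h3 : (|γ| / (a * b)) * (2 * (a * b) * (x * y)) ≤ (|γ| / (a * b)) * (α * x ^ 2 + β * y ^ 2) :=
    mul_le_mul_of_nonneg_left h1 (by positivity)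
  have h4 : (|γ| / (a * b)) * (2 * (a * b) * (x * y)) = 2 * |γ| * (x * y) := by
    field_simp
  have hq : (1 - |γ| / (a * b)) * (α * x ^ 2 + β * y ^ 2)
      ≤ α * x ^ 2 + β * y ^ 2 + 2 * γ * x * y := by nlinarith
  have h5 : min α β * x ^ 2 ≤ α * x ^ 2 :=
    mul_le_mul_of_nonneg_right (min_le_left _ _) (sq_nonneg x)
  have h6 : min α β * y ^ 2 ≤ β * y ^ 2 :=
    mul_le_mul_of_nonneg_right (min_le_right _ _) (sq_nonneg y)
  have h7 : (0:ℝ) ≤ 1 - |γ| / (a * b) := by linarith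
  have h8 : (1 - |γ| / (a * b)) * (min α β * x ^ 2 + min α β * y ^ 2)
      ≤ (1 - |γ| / (a * b)) * (α * x ^ 2 + β * y ^ 2) :=
    mul_le_mul_of_nonneg_left (by linarith) h7
  nlinarith

private lemma expE_le {α β γ σ c : ℝ} (hσ : σ ≠ 0)
    (hc : ∀ x y : ℝ, 0 ≤ x → 0 ≤ y →
      c * x ^ 2 + c * y ^ 2 ≤ α * x ^ 2 + β * y ^ 2 + 2 * γ * x * y)
    {x y : ℝ} (hx : 0 ≤ x) (hy : 0 ≤ y) :
    Real.exp (-(α * x ^ 2 + β * y ^ 2 + 2 * γ * x * y) / (2 * σ ^ 2))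
      ≤ Real.exp (-(c / (2 * σ ^ 2)) * x ^ 2) * Real.exp (-(c / (2 * σ ^ 2)) * y ^ 2) := by
  rw [← Real.exp_add]
  apply Real.exp_le_exp.mpr
  have h2σ : (0:ℝ) < 2 * σ ^ 2 := by positivity
  have : -(c / (2 * σ ^ 2)) * x ^ 2 + -(c / (2 * σ ^ 2)) * y ^ 2
      = -(c * x ^ 2 + c * y ^ 2) / (2 * σ ^ 2) := by ring
  rw [this, div_le_div_iff₀ h2σ h2σ]
  nlinarith [hc x y hx hy]

private lemma hasDerivAt_x (α β γ σ : ℝ) (hσ : σ ≠ 0) (y x : ℝ) :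
    HasDerivAt (fun x => -σ^2 * Real.exp (-(α * x ^ 2 + β * y ^ 2 + 2 * γ * x * y) / (2 * σ ^ 2)))
      ((α * x + γ * y) * Real.exp (-(α * x ^ 2 + β * y ^ 2 + 2 * γ * x * y) / (2 * σ ^ 2))) x := by
  have hfun : (fun x : ℝ => α * x ^ 2 + β * y ^ 2 + 2 * γ * x * y)
      = fun x : ℝ => (α * x ^ 2 + β * y ^ 2) + (2 * γ * y) * x := by funext x; ring
  have hp : HasDerivAt (fun x : ℝ => α * x ^ 2 + β * y ^ 2 + 2 * γ * x * y)
      (2 * α * x + 2 * γ * y) x := by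
    rw [hfun]
    have h2 : HasDerivAt (fun x : ℝ => x ^ 2) (2 * x) x := by simpa using hasDerivAt_pow 2 x
    have := ((h2.const_mul α).add_const (β * y ^ 2)).add ((hasDerivAt_id x).const_mul (2 * γ * y))
    exact this.congr_deriv (by ring)
  have h1 := ((hp.neg.div_const (2 * σ ^ 2)).exp).const_mul (-σ^2)
  exact h1.congr_deriv (by simp only [Pi.neg_apply]; field_simp)

private lemma hasDerivAt_y (α β γ σ : ℝ) (hσ : σ ≠ 0) (x y : ℝ) :
    HasDerivAt (fun y => -σ^2 * Real.exp (-(α * x ^ 2 + β * y ^ 2 + 2 * γ * x * y) / (2 * σ ^ 2)))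
      ((β * y + γ * x) * Real.exp (-(α * x ^ 2 + β * y ^ 2 + 2 * γ * x * y) / (2 * σ ^ 2))) y := by
  have hfun : (fun y : ℝ => α * x ^ 2 + β * y ^ 2 + 2 * γ * x * y)
      = fun y : ℝ => (β * y ^ 2 + α * x ^ 2) + (2 * γ * x) * y := by funext y; ring
  have hp : HasDerivAt (fun y : ℝ => α * x ^ 2 + β * y ^ 2 + 2 * γ * x * y)
      (2 * β * y + 2 * γ * x) y := by
    rw [hfun]
    have h2 : HasDerivAt (fun y : ℝ => y ^ 2) (2 * y) y := by simpa using hasDerivAt_pow 2 y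
    have := ((h2.const_mul β).add_const (α * x ^ 2)).add ((hasDerivAt_id y).const_mul (2 * γ * x))
    exact this.congr_deriv (by ring)
  have h1 := ((hp.neg.div_const (2 * σ ^ 2)).exp).const_mul (-σ^2)
  exact h1.congr_deriv (by simp only [Pi.neg_apply]; field_simp)

private lemma integral_x_lin (α β γ σ : ℝ) (hσ : σ ≠ 0) (y : ℝ) :
    ∫ x in (0:ℝ)..y, (α * x + γ * y) *
        Real.exp (-(α * x ^ 2 + β * y ^ 2 + 2 * γ * x * y) / (2 * σ ^ 2))
      = σ^2 * Real.exp (-(β * y ^ 2) / (2 * σ ^ 2))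
        - σ^2 * Real.exp (-((α + β + 2 * γ) * y ^ 2) / (2 * σ ^ 2)) := by
  rw [intervalIntegral.integral_eq_sub_of_hasDerivAt
    (fun x _ => hasDerivAt_x α β γ σ hσ y x)
    (Continuous.intervalIntegrable (by fun_prop) 0 y)]
  have e1 : -(α * y ^ 2 + β * y ^ 2 + 2 * γ * y * y) / (2 * σ ^ 2)
      = -((α + β + 2 * γ) * y ^ 2) / (2 * σ ^ 2) := by ring
  have e2 : -(α * 0 ^ 2 + β * y ^ 2 + 2 * γ * 0 * y) / (2 * σ ^ 2)
      = -(β * y ^ 2) / (2 * σ ^ 2) := by ring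
  rw [e1, e2]; ring

private lemma integrableOn_y_lin {α β γ σ : ℝ} (hα : 0 < α) (hβ : 0 < β)
    (hγ : α * β - γ ^ 2 > 0) (hσ : 0 < σ) {x : ℝ} (hx : 0 ≤ x) :
    IntegrableOn (fun y => (β * y + γ * x) *
      Real.exp (-(α * x ^ 2 + β * y ^ 2 + 2 * γ * x * y) / (2 * σ ^ 2))) (Ioi x) := by
  obtain ⟨c, hc0, hc⟩ := quad_lower hα hβ hγ
  have hk : (0:ℝ) < c / (2 * σ ^ 2) := by positivity
  have hg : IntegrableOn (fun y : ℝ => (β + |γ|) * (y * Real.exp (-(c / (2 * σ ^ 2)) * y ^ 2)))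
      (Ioi x) := ((integrable_mul_exp_neg_mul_sq hk).const_mul _).integrableOn
  apply Integrable.mono' hg (Continuous.aestronglyMeasurable (by fun_prop)).restrict
  filter_upwards [ae_restrict_mem measurableSet_Ioi] with y hy
  have hy0 : 0 ≤ y := le_trans hx (le_of_lt hy)
  have hE := expE_le (σ := σ) (ne_of_gt hσ) hc hx hy0
  have hE1 : Real.exp (-(c / (2 * σ ^ 2)) * x ^ 2) ≤ 1 := by
    apply Real.exp_le_one_iff.mpr; nlinarith [sq_nonneg x]
  have hEy : Real.exp (-(α * x ^ 2 + β * y ^ 2 + 2 * γ * x * y) / (2 * σ ^ 2))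
      ≤ Real.exp (-(c / (2 * σ ^ 2)) * y ^ 2) := by
    calc _ ≤ Real.exp (-(c / (2 * σ ^ 2)) * x ^ 2) * Real.exp (-(c / (2 * σ ^ 2)) * y ^ 2) := hE
    _ ≤ 1 * Real.exp (-(c / (2 * σ ^ 2)) * y ^ 2) := by
        apply mul_le_mul_of_nonneg_right hE1 (Real.exp_pos _).le
    _ = _ := one_mul _
  rw [norm_mul, Real.norm_eq_abs, Real.norm_eq_abs, abs_of_pos (Real.exp_pos _)]
  have habs : |β * y + γ * x| ≤ (β + |γ|) * y := by
    have h1 : |β * y + γ * x| ≤ |β * y| + |γ * x| := abs_add_le _ _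
    rw [abs_mul, abs_mul, abs_of_pos hβ, abs_of_nonneg hy0, abs_of_nonneg hx] at h1
    nlinarith [abs_nonneg γ, (show x < y from hy).le]
  calc |β * y + γ * x| * Real.exp (-(α * x ^ 2 + β * y ^ 2 + 2 * γ * x * y) / (2 * σ ^ 2))
      ≤ ((β + |γ|) * y) * Real.exp (-(c / (2 * σ ^ 2)) * y ^ 2) := by
        apply mul_le_mul habs hEy (Real.exp_pos _).le (by positivity)
    _ = (β + |γ|) * (y * Real.exp (-(c / (2 * σ ^ 2)) * y ^ 2)) := by ring

private lemma integrableOn_xe {α β γ σ : ℝ} (hα : 0 < α) (hβ : 0 < β)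
    (hγ : α * β - γ ^ 2 > 0) (hσ : 0 < σ) {x : ℝ} (hx : 0 ≤ x) :
    IntegrableOn (fun y => x *
      Real.exp (-(α * x ^ 2 + β * y ^ 2 + 2 * γ * x * y) / (2 * σ ^ 2))) (Ioi x) := by
  obtain ⟨c, hc0, hc⟩ := quad_lower hα hβ hγ
  have hk : (0:ℝ) < c / (2 * σ ^ 2) := by positivity
  have hg : IntegrableOn (fun y : ℝ => x * Real.exp (-(c / (2 * σ ^ 2)) * y ^ 2))
      (Ioi x) := ((integrable_exp_neg_mul_sq hk).const_mul _).integrableOn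
  apply Integrable.mono' hg (Continuous.aestronglyMeasurable (by fun_prop)).restrict
  filter_upwards [ae_restrict_mem measurableSet_Ioi] with y hy
  have hy0 : 0 ≤ y := le_trans hx (le_of_lt hy)
  have hE := expE_le (σ := σ) (ne_of_gt hσ) hc hx hy0
  have hE1 : Real.exp (-(c / (2 * σ ^ 2)) * x ^ 2) ≤ 1 := by
    apply Real.exp_le_one_iff.mpr; nlinarith [sq_nonneg x]
  have hEy : Real.exp (-(α * x ^ 2 + β * y ^ 2 + 2 * γ * x * y) / (2 * σ ^ 2))
      ≤ Real.exp (-(c / (2 * σ ^ 2)) * y ^ 2) := by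
    calc _ ≤ Real.exp (-(c / (2 * σ ^ 2)) * x ^ 2) * Real.exp (-(c / (2 * σ ^ 2)) * y ^ 2) := hE
    _ ≤ 1 * Real.exp (-(c / (2 * σ ^ 2)) * y ^ 2) := by
        apply mul_le_mul_of_nonneg_right hE1 (Real.exp_pos _).le
    _ = _ := one_mul _
  rw [norm_mul, Real.norm_eq_abs, Real.norm_eq_abs, abs_of_pos (Real.exp_pos _),
    abs_of_nonneg hx]
  exact mul_le_mul_of_nonneg_left hEy hx

private lemma tendsto_negexp {α β γ σ : ℝ} (hα : 0 < α) (hβ : 0 < β)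
    (hγ : α * β - γ ^ 2 > 0) (hσ : 0 < σ) {x : ℝ} (hx : 0 ≤ x) :
    Tendsto (fun y => -σ^2 *
        Real.exp (-(α * x ^ 2 + β * y ^ 2 + 2 * γ * x * y) / (2 * σ ^ 2)))
      atTop (𝓝 0) := by
  obtain ⟨c, hc0, hc⟩ := quad_lower hα hβ hγ
  have hk : (0:ℝ) < c / (2 * σ ^ 2) := by positivity
  apply squeeze_zero_norm' (a := fun y => σ^2 * Real.exp (-(c / (2 * σ ^ 2)) * y ^ 2))
  · filter_upwards [eventually_ge_atTop (0:ℝ)] with y hy0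
    have hE := expE_le (σ := σ) (ne_of_gt hσ) hc hx hy0
    have hE1 : Real.exp (-(c / (2 * σ ^ 2)) * x ^ 2) ≤ 1 := by
      apply Real.exp_le_one_iff.mpr; nlinarith [sq_nonneg x]
    have hEy : Real.exp (-(α * x ^ 2 + β * y ^ 2 + 2 * γ * x * y) / (2 * σ ^ 2))
        ≤ Real.exp (-(c / (2 * σ ^ 2)) * y ^ 2) := by
      calc _ ≤ Real.exp (-(c / (2 * σ ^ 2)) * x ^ 2) * Real.exp (-(c / (2 * σ ^ 2)) * y ^ 2) := hE
      _ ≤ 1 * Real.exp (-(c / (2 * σ ^ 2)) * y ^ 2) := by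
          apply mul_le_mul_of_nonneg_right hE1 (Real.exp_pos _).le
      _ = _ := one_mul _
    rw [norm_mul, Real.norm_eq_abs, Real.norm_eq_abs, abs_of_pos (Real.exp_pos _)]
    have habs : |(-σ^2 : ℝ)| = σ^2 := by rw [abs_neg, abs_of_pos (by positivity)]
    rw [habs]
    exact mul_le_mul_of_nonneg_left hEy (by positivity)
  · have h1 : Tendsto (fun y : ℝ => (c / (2 * σ ^ 2)) * y ^ 2) atTop atTop :=
      Tendsto.const_mul_atTop hk (tendsto_pow_atTop two_ne_zero)
    have h2 : Tendsto (fun y : ℝ => Real.exp (-((c / (2 * σ ^ 2)) * y ^ 2))) atTop (𝓝 0) :=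
      Real.tendsto_exp_neg_atTop_nhds_zero.comp h1
    have h3 := h2.const_mul (σ^2)
    rw [mul_zero] at h3
    convert h3 using 2 with y
    ring_nf

private lemma integral_y_improper {α β γ σ : ℝ} (hα : 0 < α) (hβ : 0 < β)
    (hγ : α * β - γ ^ 2 > 0) (hσ : 0 < σ) {x : ℝ} (hx : 0 ≤ x) :
    ∫ y in Ioi x, (β * y + γ * x) *
        Real.exp (-(α * x ^ 2 + β * y ^ 2 + 2 * γ * x * y) / (2 * σ ^ 2))
      = σ^2 * Real.exp (-((α + β + 2 * γ) * x ^ 2) / (2 * σ ^ 2)) := by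
  have hσ' : σ ≠ 0 := ne_of_gt hσ
  rw [MeasureTheory.integral_Ioi_of_hasDerivAt_of_tendsto'
    (fun y _ => hasDerivAt_y α β γ σ hσ' x y)
    (integrableOn_y_lin hα hβ hγ hσ hx) (tendsto_negexp hα hβ hγ hσ hx)]
  have e1 : -(α * x ^ 2 + β * x ^ 2 + 2 * γ * x * x) / (2 * σ ^ 2)
      = -((α + β + 2 * γ) * x ^ 2) / (2 * σ ^ 2) := by ring
  rw [e1]; ring

private lemma gauss_val {c σ : ℝ} (hc : 0 < c) (hσ : 0 < σ) :
    ∫ y in Ioi (0:ℝ), Real.exp (-(c * y ^ 2) / (2 * σ ^ 2))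
      = Real.sqrt (2 * π) * σ / (2 * Real.sqrt c) := by
  have h : ∀ y : ℝ, -(c * y ^ 2) / (2 * σ ^ 2) = -(c / (2 * σ ^ 2)) * y ^ 2 := by
    intro y; ring
  simp_rw [h]
  rw [integral_gaussian_Ioi]
  rw [show π / (c / (2 * σ ^ 2)) = (2 * π) * σ ^ 2 / c by field_simp]
  rw [Real.sqrt_div (by positivity), Real.sqrt_mul (by positivity), Real.sqrt_sq hσ.le]
  ring

private lemma gauss_int_s17 {c σ : ℝ} (hc : 0 < c) (hσ : 0 < σ) :
    Integrable (fun y : ℝ => Real.exp (-(c * y ^ 2) / (2 * σ ^ 2))) := by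
  have h : ∀ y : ℝ, -(c * y ^ 2) / (2 * σ ^ 2) = -(c / (2 * σ ^ 2)) * y ^ 2 := by
    intro y; ring
  simp_rw [h]
  exact integrable_exp_neg_mul_sq (by positivity)

private lemma swap_aux {f : ℝ → ℝ → ℝ} (hf : Continuous fun p : ℝ × ℝ => f p.1 p.2)
    {g h : ℝ → ℝ} (hg : Integrable g) (hh : Integrable h)
    (hg0 : ∀ x, 0 ≤ g x) (hh0 : ∀ y, 0 ≤ h y)
    (hbound : ∀ x y : ℝ, 0 < x → x ≤ y → ‖f x y‖ ≤ g x * h y) :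
    ((∫ y in Ioi (0:ℝ), ∫ x in (0:ℝ)..y, f x y)
        = ∫ x in Ioi (0:ℝ), ∫ y in Ioi x, f x y)
      ∧ Integrable (fun y => ∫ x in (0:ℝ)..y, f x y) (volume.restrict (Ioi 0))
      ∧ Integrable (fun x => ∫ y in Ioi x, f x y) (volume.restrict (Ioi 0)) := by
  set F : ℝ → ℝ → ℝ := fun x y => if x ≤ y then f x y else 0 with hF
  have hFunc : Function.uncurry F
      = Set.indicator {p : ℝ × ℝ | p.1 ≤ p.2} (fun p => f p.1 p.2) := by
    funext p
    simp only [Function.uncurry, hF, Set.indicator_apply, Set.mem_setOf_eq]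
  have hFmeas : AEStronglyMeasurable (Function.uncurry F)
      ((volume.restrict (Ioi (0:ℝ))).prod (volume.restrict (Ioi (0:ℝ)))) := by
    rw [hFunc]
    exact hf.aestronglyMeasurable.indicator
      (isClosed_le continuous_fst continuous_snd).measurableSet
  have hGint : Integrable (fun p : ℝ × ℝ => g p.1 * h p.2)
      ((volume.restrict (Ioi (0:ℝ))).prod (volume.restrict (Ioi (0:ℝ)))) :=
    Integrable.mul_prod hg.restrict hh.restrict
  have hFint : Integrable (Function.uncurry F)
      ((volume.restrict (Ioi (0:ℝ))).prod (volume.restrict (Ioi (0:ℝ)))) := by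
    apply Integrable.mono' hGint hFmeas
    rw [Measure.prod_restrict]
    filter_upwards [ae_restrict_mem (measurableSet_Ioi.prod measurableSet_Ioi)] with p hp
    obtain ⟨hp1, hp2⟩ := hp
    by_cases hle : p.1 ≤ p.2
    · simpa [Function.uncurry, hF, hle] using hbound p.1 p.2 hp1 hle
    · simp only [Function.uncurry, hF, hle, if_false]
      simpa using mul_nonneg (hg0 p.1) (hh0 p.2)
  have hptL : ∀ y ∈ Ioi (0:ℝ), (∫ x in Ioi (0:ℝ), F x y) = ∫ x in (0:ℝ)..y, f x y := by
    intro y hy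
    have h1 : ∀ x : ℝ, F x y = (Iic y).indicator (fun x => f x y) x := by
      intro x; simp [hF, Set.indicator_apply, Set.mem_Iic]
    simp_rw [h1]
    rw [setIntegral_indicator measurableSet_Iic, Set.Ioi_inter_Iic,
      intervalIntegral.integral_of_le (le_of_lt hy)]
  have hptR : ∀ x ∈ Ioi (0:ℝ), (∫ y in Ioi (0:ℝ), F x y) = ∫ y in Ioi x, f x y := by
    intro x hx
    have h1 : ∀ y : ℝ, F x y = (Ici x).indicator (fun y => f x y) y := by
      intro y; simp [hF, Set.indicator_apply, Set.mem_Ici]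
    simp_rw [h1]
    rw [setIntegral_indicator measurableSet_Ici,
      Set.inter_eq_self_of_subset_right (Set.Ici_subset_Ioi.mpr hx),
      integral_Ici_eq_integral_Ioi]
  have hswap : (∫ x in Ioi (0:ℝ), ∫ y in Ioi (0:ℝ), F x y)
      = ∫ y in Ioi (0:ℝ), ∫ x in Ioi (0:ℝ), F x y :=
    MeasureTheory.integral_integral_swap hFint
  refine ⟨?_, ?_, ?_⟩
  · calc (∫ y in Ioi (0:ℝ), ∫ x in (0:ℝ)..y, f x y)
        = ∫ y in Ioi (0:ℝ), ∫ x in Ioi (0:ℝ), F x y :=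
          (setIntegral_congr_fun measurableSet_Ioi (fun y hy => (hptL y hy).symm))
      _ = ∫ x in Ioi (0:ℝ), ∫ y in Ioi (0:ℝ), F x y := hswap.symm
      _ = ∫ x in Ioi (0:ℝ), ∫ y in Ioi x, f x y :=
          setIntegral_congr_fun measurableSet_Ioi (fun x hx => hptR x hx)
  · have hm : Integrable (fun y => ∫ x, Function.uncurry F (x, y) ∂(volume.restrict (Ioi (0:ℝ))))
        (volume.restrict (Ioi (0:ℝ))) := hFint.integral_prod_right
    apply hm.congr
    filter_upwards [ae_restrict_mem measurableSet_Ioi] with y hy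
    exact hptL y hy
  · have hm : Integrable (fun x => ∫ y, Function.uncurry F (x, y) ∂(volume.restrict (Ioi (0:ℝ))))
        (volume.restrict (Ioi (0:ℝ))) := hFint.integral_prod_left
    apply hm.congr
    filter_upwards [ae_restrict_mem measurableSet_Ioi] with x hx
    exact hptR x hx

theorem stmt_17 (α β γ σ : ℝ) (hα : 0 < α) (hβ : 0 < β) (hγ : α * β - γ ^ 2 > 0)
    (hσ : 0 < σ) :
    ∫ y in Set.Ioi (0:ℝ), ∫ x in (0:ℝ)..y,
        x * Real.exp (-(α * x ^ 2 + β * y ^ 2 + 2 * γ * x * y) / (2 * σ ^ 2))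
      = (Real.sqrt (2 * Real.pi) * σ ^ 3 / 2) * (β / (α * β - γ ^ 2))
          * (1 / Real.sqrt β - (β + γ) / (β * Real.sqrt (α + β + 2 * γ))) := by
  have hσ' : σ ≠ 0 := ne_of_gt hσ
  have hδ : 0 < α + β + 2 * γ := delta_pos' hα hβ hγ
  obtain ⟨c, hc0, hc⟩ := quad_lower hα hβ hγ
  have hk0 : (0:ℝ) < c / (2 * σ ^ 2) := by positivity
  -- dominating functions
  have hgabs : Integrable (fun x : ℝ => |x| * Real.exp (-(c / (2 * σ ^ 2)) * x ^ 2)) := by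
    apply (integrable_mul_exp_neg_mul_sq hk0).abs.congr
    filter_upwards with x
    simp [abs_mul, Real.abs_exp]
  have hgexp : Integrable (fun x : ℝ => Real.exp (-(c / (2 * σ ^ 2)) * x ^ 2)) :=
    integrable_exp_neg_mul_sq hk0
  -- the swap results
  have S1 := swap_aux (f := fun x y => x *
      Real.exp (-(α * x ^ 2 + β * y ^ 2 + 2 * γ * x * y) / (2 * σ ^ 2)))
    (by fun_prop) hgabs hgexp
    (fun x => by positivity) (fun y => (Real.exp_pos _).le)
    (by
      intro x y hx hxy
      have hx0 : 0 ≤ x := hx.le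
      have hy0 : 0 ≤ y := hx0.trans hxy
      rw [norm_mul, Real.norm_eq_abs, Real.norm_eq_abs, Real.abs_exp]
      calc |x| * Real.exp (-(α * x ^ 2 + β * y ^ 2 + 2 * γ * x * y) / (2 * σ ^ 2))
          ≤ |x| * (Real.exp (-(c / (2 * σ ^ 2)) * x ^ 2)
              * Real.exp (-(c / (2 * σ ^ 2)) * y ^ 2)) :=
            mul_le_mul_of_nonneg_left (expE_le hσ' hc hx0 hy0) (abs_nonneg x)
        _ = (|x| * Real.exp (-(c / (2 * σ ^ 2)) * x ^ 2))
              * Real.exp (-(c / (2 * σ ^ 2)) * y ^ 2) := by ring)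
  have S2 := swap_aux (f := fun x y => y *
      Real.exp (-(α * x ^ 2 + β * y ^ 2 + 2 * γ * x * y) / (2 * σ ^ 2)))
    (by fun_prop) hgexp hgabs
    (fun x => (Real.exp_pos _).le) (fun y => by positivity)
    (by
      intro x y hx hxy
      have hx0 : 0 ≤ x := hx.le
      have hy0 : 0 ≤ y := hx0.trans hxy
      rw [norm_mul, Real.norm_eq_abs, Real.norm_eq_abs, Real.abs_exp]
      calc |y| * Real.exp (-(α * x ^ 2 + β * y ^ 2 + 2 * γ * x * y) / (2 * σ ^ 2))
          ≤ |y| * (Real.exp (-(c / (2 * σ ^ 2)) * x ^ 2)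
              * Real.exp (-(c / (2 * σ ^ 2)) * y ^ 2)) :=
            mul_le_mul_of_nonneg_left (expE_le hσ' hc hx0 hy0) (abs_nonneg y)
        _ = Real.exp (-(c / (2 * σ ^ 2)) * x ^ 2)
              * (|y| * Real.exp (-(c / (2 * σ ^ 2)) * y ^ 2)) := by ring)
  set J := ∫ y in Set.Ioi (0:ℝ), ∫ x in (0:ℝ)..y,
      x * Real.exp (-(α * x ^ 2 + β * y ^ 2 + 2 * γ * x * y) / (2 * σ ^ 2)) with hJdef
  set K := ∫ y in Set.Ioi (0:ℝ), ∫ x in (0:ℝ)..y,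
      y * Real.exp (-(α * x ^ 2 + β * y ^ 2 + 2 * γ * x * y) / (2 * σ ^ 2)) with hKdef
  set A1 := Real.sqrt (2 * π) * σ / (2 * Real.sqrt β) with hA1
  set A2 := Real.sqrt (2 * π) * σ / (2 * Real.sqrt (α + β + 2 * γ)) with hA2
  -- Equation I
  have hinner1 : ∀ y : ℝ, (∫ x in (0:ℝ)..y,
      x * Real.exp (-(α * x ^ 2 + β * y ^ 2 + 2 * γ * x * y) / (2 * σ ^ 2)))
      = (σ^2/α) * Real.exp (-(β * y ^ 2) / (2 * σ ^ 2))
        - (σ^2/α) * Real.exp (-((α + β + 2 * γ) * y ^ 2) / (2 * σ ^ 2))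
        - (γ/α) * ∫ x in (0:ℝ)..y,
            y * Real.exp (-(α * x ^ 2 + β * y ^ 2 + 2 * γ * x * y) / (2 * σ ^ 2)) := by
    intro y
    have key : ∀ x : ℝ, x * Real.exp (-(α * x ^ 2 + β * y ^ 2 + 2 * γ * x * y) / (2 * σ ^ 2))
        = (1/α) * ((α * x + γ * y) *
            Real.exp (-(α * x ^ 2 + β * y ^ 2 + 2 * γ * x * y) / (2 * σ ^ 2)))
          - (γ/α) * (y * Real.exp (-(α * x ^ 2 + β * y ^ 2 + 2 * γ * x * y) / (2 * σ ^ 2))) := by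
      intro x; field_simp; ring
    rw [intervalIntegral.integral_congr (g := fun x =>
        (1/α) * ((α * x + γ * y) *
          Real.exp (-(α * x ^ 2 + β * y ^ 2 + 2 * γ * x * y) / (2 * σ ^ 2)))
        - (γ/α) * (y * Real.exp (-(α * x ^ 2 + β * y ^ 2 + 2 * γ * x * y) / (2 * σ ^ 2))))
      (fun x _ => key x)]
    rw [intervalIntegral.integral_sub
        (((Continuous.intervalIntegrable (by fun_prop) 0 y)).const_mul _)
        (((Continuous.intervalIntegrable (by fun_prop) 0 y)).const_mul _),
      intervalIntegral.integral_const_mul, intervalIntegral.integral_const_mul,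
      integral_x_lin α β γ σ hσ' y]
    ring
  have eqI : J = (σ^2/α) * A1 - (σ^2/α) * A2 - (γ/α) * K := by
    have h1 : Integrable (fun y : ℝ =>
        (σ^2/α) * Real.exp (-(β * y ^ 2) / (2 * σ ^ 2))) (volume.restrict (Ioi 0)) :=
      ((gauss_int_s17 hβ hσ).const_mul _).restrict
    have h2 : Integrable (fun y : ℝ =>
        (σ^2/α) * Real.exp (-((α + β + 2 * γ) * y ^ 2) / (2 * σ ^ 2)))
        (volume.restrict (Ioi 0)) := ((gauss_int_s17 hδ hσ).const_mul _).restrict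
    have h3 : Integrable (fun y : ℝ => (γ/α) * ∫ x in (0:ℝ)..y,
        y * Real.exp (-(α * x ^ 2 + β * y ^ 2 + 2 * γ * x * y) / (2 * σ ^ 2)))
        (volume.restrict (Ioi 0)) := S2.2.1.const_mul _
    calc J = ∫ y in Ioi (0:ℝ),
        ((σ^2/α) * Real.exp (-(β * y ^ 2) / (2 * σ ^ 2))
        - (σ^2/α) * Real.exp (-((α + β + 2 * γ) * y ^ 2) / (2 * σ ^ 2))
        - (γ/α) * ∫ x in (0:ℝ)..y,
            y * Real.exp (-(α * x ^ 2 + β * y ^ 2 + 2 * γ * x * y) / (2 * σ ^ 2))) :=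
          setIntegral_congr_fun measurableSet_Ioi (fun y _ => hinner1 y)
      _ = (σ^2/α) * A1 - (σ^2/α) * A2 - (γ/α) * K := by
          have h12 : Integrable (fun y : ℝ =>
              (σ^2/α) * Real.exp (-(β * y ^ 2) / (2 * σ ^ 2))
              - (σ^2/α) * Real.exp (-((α + β + 2 * γ) * y ^ 2) / (2 * σ ^ 2)))
              (volume.restrict (Ioi 0)) := h1.sub h2
          rw [integral_sub h12 h3, integral_sub h1 h2,
            integral_const_mul, integral_const_mul, integral_const_mul,
            gauss_val hβ hσ, gauss_val hδ hσ]
  -- Equation II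
  have hinner2 : ∀ x ∈ Ioi (0:ℝ), (∫ y in Ioi x,
      y * Real.exp (-(α * x ^ 2 + β * y ^ 2 + 2 * γ * x * y) / (2 * σ ^ 2)))
      = (σ^2/β) * Real.exp (-((α + β + 2 * γ) * x ^ 2) / (2 * σ ^ 2))
        - (γ/β) * ∫ y in Ioi x,
            x * Real.exp (-(α * x ^ 2 + β * y ^ 2 + 2 * γ * x * y) / (2 * σ ^ 2)) := by
    intro x hx
    have hx0 : 0 ≤ x := (le_of_lt hx)
    have key : ∀ y : ℝ, y * Real.exp (-(α * x ^ 2 + β * y ^ 2 + 2 * γ * x * y) / (2 * σ ^ 2))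
        = (1/β) * ((β * y + γ * x) *
            Real.exp (-(α * x ^ 2 + β * y ^ 2 + 2 * γ * x * y) / (2 * σ ^ 2)))
          - (γ/β) * (x * Real.exp (-(α * x ^ 2 + β * y ^ 2 + 2 * γ * x * y) / (2 * σ ^ 2))) := by
      intro y; field_simp; ring
    simp_rw [key]
    rw [integral_sub ((integrableOn_y_lin hα hβ hγ hσ hx0).const_mul _)
        ((integrableOn_xe hα hβ hγ hσ hx0).const_mul _),
      integral_const_mul, integral_const_mul, integral_y_improper hα hβ hγ hσ hx0]
    ring
  have eqII : K = (σ^2/β) * A2 - (γ/β) * J := by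
    have h1 : Integrable (fun x : ℝ =>
        (σ^2/β) * Real.exp (-((α + β + 2 * γ) * x ^ 2) / (2 * σ ^ 2)))
        (volume.restrict (Ioi 0)) := ((gauss_int_s17 hδ hσ).const_mul _).restrict
    have h3 : Integrable (fun x : ℝ => (γ/β) * ∫ y in Ioi x,
        x * Real.exp (-(α * x ^ 2 + β * y ^ 2 + 2 * γ * x * y) / (2 * σ ^ 2)))
        (volume.restrict (Ioi 0)) := S1.2.2.const_mul _
    calc K = ∫ x in Ioi (0:ℝ), ∫ y in Ioi x,
        y * Real.exp (-(α * x ^ 2 + β * y ^ 2 + 2 * γ * x * y) / (2 * σ ^ 2)) := S2.1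
      _ = ∫ x in Ioi (0:ℝ),
          ((σ^2/β) * Real.exp (-((α + β + 2 * γ) * x ^ 2) / (2 * σ ^ 2))
          - (γ/β) * ∫ y in Ioi x,
              x * Real.exp (-(α * x ^ 2 + β * y ^ 2 + 2 * γ * x * y) / (2 * σ ^ 2))) :=
          setIntegral_congr_fun measurableSet_Ioi (fun x hx => hinner2 x hx)
      _ = (σ^2/β) * A2 - (γ/β) * J := by
          rw [integral_sub h1 h3, integral_const_mul, integral_const_mul,
            gauss_val hδ hσ, ← S1.1]
  -- solve the linear system
  have eqI' : α * J = σ^2 * A1 - σ^2 * A2 - γ * K := by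
    rw [eqI]; field_simp; try ring
  have eqII' : β * K = σ^2 * A2 - γ * J := by
    rw [eqII]; field_simp; try ring
  have hJ : (α * β - γ ^ 2) * J = σ^2 * β * A1 - σ^2 * (β + γ) * A2 := by
    linear_combination β * eqI' - γ * eqII'
  have hne : α * β - γ ^ 2 ≠ 0 := ne_of_gt hγ
  have hsβ : Real.sqrt β ≠ 0 := ne_of_gt (Real.sqrt_pos.mpr hβ)
  have hsδ : Real.sqrt (α + β + 2 * γ) ≠ 0 := ne_of_gt (Real.sqrt_pos.mpr hδ)
  apply mul_left_cancel₀ hne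
  rw [hJ, hA1, hA2]
  field_simp
  rw [mul_div_cancel_right₀ _ (by rw [mul_comm]; exact hne)]
end
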